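/- arXiv:2208.01391 — 7 statements merged into one kernel-verified Lean document; each statement's English description precedes it below -/
import Mathlib

section
/- Let ε₀ > 0 be a real number, let εₘ ∈ ℂ satisfy Re(εₘ) < 0 and Im(εₘ) > 0, and set c := conj(εₘ − ε₀). Let γ ∈ (0, π/2) satisfy Re(e^{iγ}·conj(εₘ)) > 0 and Re(e^{iγ}·c) < 0. Let M be a complex 3×3 matrix with Mᵀ = M, and suppose that for every ξ ∈ ℝ³ one has (i) (ξ·Im(c·M)ξ)/Im(c) ≤ ‖ξ‖² and (ii) (ξ·Re(e^{iγ}·c·M)ξ)/Re(e^{iγ}·c) ≥ ‖ξ‖². If t ∈ ℝ³ is a unit vector with t·Mt = 1, then M t = t, i.e. t (viewed as a complex vector) is an eigenvector of M corresponding to the eigenvalue 1. -/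
open Complex BigOperators Finset

/-- Quadratic form `ξ · A ξ = ∑ i j, ξ i * A i j * ξ j` of a complex matrix
evaluated at a real vector (viewed in `ℂ`). -/
noncomputable def cquadForm (A : Matrix (Fin 3) (Fin 3) ℂ) (ξ : Fin 3 → ℝ) : ℂ :=
  ∑ i, ∑ j, (ξ i : ℂ) * A i j * (ξ j : ℂ)

lemma quad_aux {a b : ℝ} (ha : 0 ≤ a) (h : ∀ s : ℝ, 0 ≤ 2*s*b + s^2*a) : b = 0 := by
  by_contra hb
  have hp : 0 < a + 1 := by linarith
  have h1 := h (-b / (a+1))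
  have hb2 : 0 < b^2 := by positivity
  have key : 2*(-b/(a+1))*b + (-b/(a+1))^2*a = (-(b^2)*(a+2))/(a+1)^2 := by
    field_simp
    ring
  rw [key] at h1
  have : (-(b^2)*(a+2))/(a+1)^2 < 0 := by
    apply div_neg_of_neg_of_pos
    · nlinarith
    · positivity
  linarith

lemma psd_kernel (A : Matrix (Fin 3) (Fin 3) ℝ) (hsym : ∀ i j, A i j = A j i)
    (hQ : ∀ ξ : Fin 3 → ℝ, 0 ≤ ∑ i, ∑ j, ξ i * A i j * ξ j)
    (t : Fin 3 → ℝ) (ht0 : ∑ i, ∑ j, t i * A i j * t j = 0) (k : Fin 3) :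
    ∑ j, A k j * t j = 0 := by
  have s10 : A 1 0 = A 0 1 := hsym 1 0
  have s20 : A 2 0 = A 0 2 := hsym 2 0
  have s21 : A 2 1 = A 1 2 := hsym 2 1
  simp only [Fin.sum_univ_three, s10, s20, s21] at ht0
  fin_cases k
  · rw [Fin.sum_univ_three]
    show A 0 0 * t 0 + A 0 1 * t 1 + A 0 2 * t 2 = 0
    refine quad_aux (a := A 0 0) ?_ ?_
    · have := hQ ![1,0,0]
      simp [Fin.sum_univ_three] at this
      linarith
    · intro s
      have := hQ ![t 0 + s, t 1, t 2]
      simp only [Fin.sum_univ_three, Matrix.cons_val_zero, Matrix.cons_val_one,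
        Matrix.head_cons, Matrix.cons_val_two, Matrix.tail_cons, s10, s20, s21] at this
      nlinarith [this, ht0]
  · rw [Fin.sum_univ_three]
    show A 1 0 * t 0 + A 1 1 * t 1 + A 1 2 * t 2 = 0
    rw [s10]
    refine quad_aux (a := A 1 1) ?_ ?_
    · have := hQ ![0,1,0]
      simp [Fin.sum_univ_three] at this
      linarith
    · intro s
      have := hQ ![t 0, t 1 + s, t 2]
      simp only [Fin.sum_univ_three, Matrix.cons_val_zero, Matrix.cons_val_one,
        Matrix.head_cons, Matrix.cons_val_two, Matrix.tail_cons, s10, s20, s21] at this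
      nlinarith [this, ht0]
  · rw [Fin.sum_univ_three]
    show A 2 0 * t 0 + A 2 1 * t 1 + A 2 2 * t 2 = 0
    rw [s20, s21]
    refine quad_aux (a := A 2 2) ?_ ?_
    · have := hQ ![0,0,1]
      simp [Fin.sum_univ_three] at this
      linarith
    · intro s
      have := hQ ![t 0, t 1, t 2 + s]
      simp only [Fin.sum_univ_three, Matrix.cons_val_zero, Matrix.cons_val_one,
        Matrix.head_cons, Matrix.cons_val_two, Matrix.tail_cons, s10, s20, s21] at this
      nlinarith [this, ht0]


/-- The matrix-algebraic core of Lemma 2.5: under the polarization tensor bounds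
(Lemma A.1), a unit vector `t` with `t · M t = 1` is an eigenvector of `M` with
eigenvalue `1`. -/
theorem tangent_eigenvector
    (ε₀ : ℝ) (hε₀ : 0 < ε₀)
    (εₘ : ℂ) (hre : εₘ.re < 0) (him : 0 < εₘ.im)
    (c : ℂ) (hc : c = (starRingEnd ℂ) (εₘ - (ε₀ : ℂ)))
    (γ : ℝ) (hγ : γ ∈ Set.Ioo 0 (Real.pi / 2))
    (hγm : 0 < (Complex.exp (γ * Complex.I) * (starRingEnd ℂ) εₘ).re)
    (hγc : (Complex.exp (γ * Complex.I) * c).re < 0)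
    (M : Matrix (Fin 3) (Fin 3) ℂ) (hMsymm : M.transpose = M)
    (hIm : ∀ ξ : Fin 3 → ℝ,
      (∑ i, ∑ j, ξ i * (c * M i j).im * ξ j) / c.im ≤ ∑ i, ξ i ^ 2)
    (hRe : ∀ ξ : Fin 3 → ℝ,
      (∑ i, ∑ j, ξ i * (Complex.exp (γ * Complex.I) * c * M i j).re * ξ j) /
          (Complex.exp (γ * Complex.I) * c).re ≥ ∑ i, ξ i ^ 2)
    (t : Fin 3 → ℝ) (ht : ∑ i, t i ^ 2 = 1)
    (htM : cquadForm M t = 1) :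
    M.mulVec (fun i => (t i : ℂ)) = fun i => (t i : ℂ) := by
  have f01 : ¬((0:Fin 3) = 1) := by decide
  have f02 : ¬((0:Fin 3) = 2) := by decide
  have f12 : ¬((1:Fin 3) = 2) := by decide
  have f10 : ¬((1:Fin 3) = 0) := by decide
  have f20 : ¬((2:Fin 3) = 0) := by decide
  have f21 : ¬((2:Fin 3) = 1) := by decide
  set d := Complex.exp (γ * Complex.I) * c with hdd
  have hcim : c.im < 0 := by
    rw [hc]
    simp only [Complex.conj_im, Complex.sub_im, Complex.ofReal_im]
    linarith
  have hdre : d.re < 0 := hγc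
  have hγI : Complex.exp ((γ : ℂ) * Complex.I)
      = ((Real.cos γ : ℂ) + (Real.sin γ : ℂ) * Complex.I) := by
    rw [Complex.exp_mul_I, ← Complex.ofReal_cos, ← Complex.ofReal_sin]
  have hdreval : d.re = Real.cos γ * c.re - Real.sin γ * c.im := by
    rw [hdd, hγI]
    simp [Complex.add_re, Complex.mul_re, Complex.add_im, Complex.mul_im,
      Complex.cos_ofReal_re, Complex.sin_ofReal_re]
  have hdimval : d.im = Real.sin γ * c.re + Real.cos γ * c.im := by
    rw [hdd, hγI]
    simp [Complex.add_re, Complex.mul_re, Complex.add_im, Complex.mul_im,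
      Complex.cos_ofReal_re, Complex.sin_ofReal_re]
    ring
  have hcos : 0 < Real.cos γ := by
    apply Real.cos_pos_of_mem_Ioo
    constructor
    · have := Real.pi_pos
      have := hγ.1
      linarith
    · exact hγ.2
  have hsym : ∀ i j, M i j = M j i := by
    intro i j
    conv_rhs => rw [← hMsymm]
    rw [Matrix.transpose_apply]
  -- the imaginary-part PSD matrix
  have hAker := psd_kernel (fun i j => (c * M i j).im - (if i = j then c.im else 0))
    (by
      intro i j
      show (c * M i j).im - (if i = j then c.im else 0) = (c * M j i).im - (if j = i then c.im else 0)
      rw [hsym i j]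
      by_cases h : i = j
      · simp [h]
      · simp [h, Ne.symm h])
    (by
      intro ξ
      have h1 := (div_le_iff_of_neg hcim).mp (hIm ξ)
      norm_num [Fin.sum_univ_three, f01, f02, f12, f10, f20, f21] at h1 ⊢
      linarith [h1])
    t
    (by
      have hq : (∑ i, ∑ j, t i * (c * M i j).im * t j) = (c * cquadForm M t).im := by
        simp only [cquadForm, Fin.sum_univ_three, mul_add, Complex.add_im,
          Complex.mul_im, Complex.mul_re, Complex.ofReal_re, Complex.ofReal_im]
        ring
      rw [htM, mul_one] at hq
      have ht' := ht
      norm_num [Fin.sum_univ_three, f01, f02, f12, f10, f20, f21] at hq ht' ⊢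
      linear_combination hq - c.im * ht')
  have hA' : ∀ k, ∑ j, (c * M k j).im * t j = c.im * t k := by
    intro k
    have h := hAker k
    simp only [sub_mul, ite_mul, zero_mul, Finset.sum_sub_distrib,
      Finset.sum_ite_eq, Finset.mem_univ, if_true] at h
    linarith
  -- the real-part PSD matrix
  have hBker := psd_kernel (fun i j => (if i = j then d.re else 0) - (d * M i j).re)
    (by
      intro i j
      show (if i = j then d.re else 0) - (d * M i j).re = (if j = i then d.re else 0) - (d * M j i).re
      rw [hsym i j]
      by_cases h : i = j
      · simp [h]
      · simp [h, Ne.symm h])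
    (by
      intro ξ
      have h1 := (le_div_iff_of_neg hdre).mp (hRe ξ)
      norm_num [Fin.sum_univ_three, f01, f02, f12, f10, f20, f21] at h1 ⊢
      linarith [h1])
    t
    (by
      have hq : (∑ i, ∑ j, t i * (d * M i j).re * t j) = (d * cquadForm M t).re := by
        simp only [cquadForm, Fin.sum_univ_three, mul_add, Complex.add_re,
          Complex.mul_im, Complex.mul_re, Complex.ofReal_re, Complex.ofReal_im]
        ring
      rw [htM, mul_one] at hq
      have ht' := ht
      norm_num [Fin.sum_univ_three, f01, f02, f12, f10, f20, f21] at hq ht' ⊢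
      linear_combination d.re * ht' - hq)
  have hB' : ∀ k, ∑ j, (d * M k j).re * t j = d.re * t k := by
    intro k
    have h := hBker k
    simp only [sub_mul, ite_mul, zero_mul, Finset.sum_sub_distrib,
      Finset.sum_ite_eq, Finset.mem_univ, if_true] at h
    linarith
  funext k
  set v := M.mulVec (fun i => (t i : ℂ)) k with hv
  have e1 : c.re * v.im + c.im * v.re = c.im * t k := by
    have hcomp : c.re * v.im + c.im * v.re = ∑ j, (c * M k j).im * t j := by
      simp only [hv, Matrix.mulVec, dotProduct, Fin.sum_univ_three,
        Complex.add_im, Complex.add_re, Complex.mul_im, Complex.mul_re,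
        Complex.ofReal_re, Complex.ofReal_im]
      ring
    rw [hcomp, hA' k]
  have e2 : d.re * v.re - d.im * v.im = d.re * t k := by
    have hcomp : d.re * v.re - d.im * v.im = ∑ j, (d * M k j).re * t j := by
      simp only [hv, Matrix.mulVec, dotProduct, Fin.sum_univ_three,
        Complex.add_im, Complex.add_re, Complex.mul_im, Complex.mul_re,
        Complex.ofReal_re, Complex.ofReal_im]
      ring
    rw [hcomp, hB' k]
  rw [hdreval, hdimval] at e2
  have hpos : 0 < Real.cos γ * (c.re^2 + c.im^2) := by
    have hne : c.im ≠ 0 := ne_of_lt hcim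
    positivity
  have hxe : v.re = t k := by
    have key : Real.cos γ * (c.re^2 + c.im^2) * (v.re - t k) = 0 := by
      linear_combination (Real.sin γ * c.re + Real.cos γ * c.im) * e1 + c.re * e2
    rcases mul_eq_zero.mp key with h | h
    · exact absurd h (ne_of_gt hpos)
    · linarith
  have hye : v.im = 0 := by
    have key : Real.cos γ * (c.re^2 + c.im^2) * v.im = 0 := by
      linear_combination (Real.cos γ * c.re - Real.sin γ * c.im) * e1 - c.im * e2
    rcases mul_eq_zero.mp key with h | h
    · exact absurd h (ne_of_gt hpos)
    · exact h
  exact Complex.ext (by simpa using hxe) (by simpa using hye)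
end

section
/- Let ε₀ > 0 be a real number, let εₘ ∈ ℂ satisfy Re(εₘ) < 0 and Im(εₘ) > 0, and set c := conj(εₘ − ε₀). Let γ ∈ (0, π/2) satisfy Re(e^{iγ}·conj(εₘ)) > 0 and Re(e^{iγ}·c) < 0. Let M be a complex 3×3 matrix such that for every ξ ∈ ℝ³ one has (i) (ξ·Im(c·M)ξ)/Im(c) ≤ ‖ξ‖² and (ii) (ξ·Re(e^{iγ}·c·M)ξ)/Re(e^{iγ}·c) ≥ ‖ξ‖². Then ξ·Im(M)ξ ≤ 0 for every ξ ∈ ℝ³. -/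
open Complex BigOperators Finset

/-- The intermediate inequality in the proof of Lemma 2.5: under the polarization
tensor bounds of Lemma A.1, the imaginary part of the polarization tensor is
negative semidefinite. -/
theorem im_polarization_tensor_nonpos
    (ε₀ : ℝ) (hε₀ : 0 < ε₀)
    (εₘ : ℂ) (hre : εₘ.re < 0) (him : 0 < εₘ.im)
    (c : ℂ) (hc : c = (starRingEnd ℂ) (εₘ - (ε₀ : ℂ)))
    (γ : ℝ) (hγ : γ ∈ Set.Ioo 0 (Real.pi / 2))
    (hγm : 0 < (Complex.exp (γ * Complex.I) * (starRingEnd ℂ) εₘ).re)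
    (hγc : (Complex.exp (γ * Complex.I) * c).re < 0)
    (M : Matrix (Fin 3) (Fin 3) ℂ)
    (hIm : ∀ ξ : Fin 3 → ℝ,
      (∑ i, ∑ j, ξ i * (c * M i j).im * ξ j) / c.im ≤ ∑ i, ξ i ^ 2)
    (hRe : ∀ ξ : Fin 3 → ℝ,
      (∑ i, ∑ j, ξ i * (Complex.exp (γ * Complex.I) * c * M i j).re * ξ j) /
          (Complex.exp (γ * Complex.I) * c).re ≥ ∑ i, ξ i ^ 2) :
    ∀ ξ : Fin 3 → ℝ, ∑ i, ∑ j, ξ i * (M i j).im * ξ j ≤ 0 := by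
  intro ξ
  -- basic sign facts
  have ha : c.re < 0 := by
    rw [hc]; simp; linarith
  have hb : c.im < 0 := by
    rw [hc]; simp; linarith
  obtain ⟨hγ0, hγ1⟩ := hγ
  have hcos : 0 < Real.cos γ := Real.cos_pos_of_mem_Ioo
    ⟨by linarith [Real.pi_pos], hγ1⟩
  have hsin : 0 < Real.sin γ := Real.sin_pos_of_pos_of_lt_pi hγ0
    (by linarith [Real.pi_pos])
  set e := Complex.exp (γ * Complex.I) with he
  have hereal : e.re = Real.cos γ := by
    rw [he]; exact Complex.exp_ofReal_mul_I_re γ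
  have heim : e.im = Real.sin γ := by
    rw [he]; exact Complex.exp_ofReal_mul_I_im γ
  have hq : (e * c).im < 0 := by
    rw [Complex.mul_im, hereal, heim]
    have : Real.cos γ * c.im < 0 := mul_neg_of_pos_of_neg hcos hb
    have : Real.sin γ * c.re < 0 := mul_neg_of_pos_of_neg hsin ha
    linarith
  set N := ∑ i, ξ i ^ 2 with hN
  set X := ∑ i, ∑ j, ξ i * (M i j).re * ξ j with hX
  set Y := ∑ i, ∑ j, ξ i * (M i j).im * ξ j with hY
  have h1 : ∑ i, ∑ j, ξ i * (c * M i j).im * ξ j = c.re * Y + c.im * X := by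
    rw [hX, hY, Finset.mul_sum, Finset.mul_sum, ← Finset.sum_add_distrib]
    refine Finset.sum_congr rfl fun i _ => ?_
    rw [Finset.mul_sum, Finset.mul_sum, ← Finset.sum_add_distrib]
    refine Finset.sum_congr rfl fun j _ => ?_
    rw [Complex.mul_im]; ring
  have h2 : ∑ i, ∑ j, ξ i * (e * c * M i j).re * ξ j
      = (e * c).re * X - (e * c).im * Y := by
    rw [hX, hY, Finset.mul_sum, Finset.mul_sum, ← Finset.sum_sub_distrib]
    refine Finset.sum_congr rfl fun i _ => ?_
    rw [Finset.mul_sum, Finset.mul_sum, ← Finset.sum_sub_distrib]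
    refine Finset.sum_congr rfl fun j _ => ?_
    rw [Complex.mul_re]; ring
  have i1 : N * c.im ≤ c.re * Y + c.im * X := by
    have := hIm ξ
    rw [h1] at this
    exact (div_le_iff_of_neg hb).mp this
  have i2 : (e * c).re * X - (e * c).im * Y ≤ N * (e * c).re := by
    have := hRe ξ
    rw [h2] at this
    exact (le_div_iff_of_neg hγc).mp this
  nlinarith [mul_pos_of_neg_of_neg hγc ha, mul_pos_of_neg_of_neg hb hq,
    mul_nonneg (le_of_lt (neg_pos.mpr hγc)) (by linarith : (0:ℝ) ≤ c.re * Y + c.im * X - N * c.im),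
    mul_nonneg (le_of_lt (neg_pos.mpr hb)) (by linarith : (0:ℝ) ≤ N * (e * c).re - ((e * c).re * X - (e * c).im * Y))]
end

section
/- Let t, n ∈ ℝ³ be unit vectors with t·n = 0 and set b := t × n. Let t̃ ∈ ℝ³ be a unit vector with t·t̃ ≠ −1. Define ñ := (t·t̃)·n − ((b·t̃)/(1 + t·t̃))·(t × t̃) − (n·t̃)·t and b̃ := (t·t̃)·b + ((n·t̃)/(1 + t·t̃))·(t × t̃) − (b·t̃)·t. Then (t̃, ñ, b̃) is an orthonormal frame with t̃ × ñ = b̃; that is, ‖ñ‖ = ‖b̃‖ = 1, t̃·ñ = t̃·b̃ = ñ·b̃ = 0, and b̃ = t̃ × ñ. -/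
open scoped Matrix RealInnerProductSpace

/-- The cross product on `EuclideanSpace ℝ (Fin 3)`. -/
noncomputable def cross3 (x y : EuclideanSpace ℝ (Fin 3)) : EuclideanSpace ℝ (Fin 3) :=
  (WithLp.equiv 2 (Fin 3 → ℝ)).symm
    (crossProduct ((WithLp.equiv 2 (Fin 3 → ℝ)) x) ((WithLp.equiv 2 (Fin 3 → ℝ)) y))



private lemma c3_cyclic (x y z : EuclideanSpace ℝ (Fin 3)) :
    ⟪x, cross3 y z⟫ = ⟪z, cross3 x y⟫ := by
  simp [cross3, cross_apply, PiLp.inner_apply, Fin.sum_univ_three, RCLike.inner_apply,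
    conj_trivial]
  ring

private lemma c3_lagrange (a b c d : EuclideanSpace ℝ (Fin 3)) :
    ⟪cross3 a b, cross3 c d⟫ = ⟪a,c⟫ * ⟪b,d⟫ - ⟪a,d⟫ * ⟪b,c⟫ := by
  simp [cross3, cross_apply, PiLp.inner_apply, Fin.sum_univ_three, RCLike.inner_apply,
    conj_trivial]
  ring

private lemma c3_triple (x y z : EuclideanSpace ℝ (Fin 3)) :
    cross3 x (cross3 y z) = ⟪x,z⟫ • y - ⟪x,y⟫ • z := by
  ext i; fin_cases i <;>
  · simp [cross3, cross_apply, PiLp.inner_apply, Fin.sum_univ_three, RCLike.inner_apply,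
      conj_trivial]
    ring

private lemma c3_self (x : EuclideanSpace ℝ (Fin 3)) : cross3 x x = 0 := by
  ext i; fin_cases i <;> simp [cross3, cross_apply]

private lemma c3_anticomm (x y : EuclideanSpace ℝ (Fin 3)) : cross3 x y = - cross3 y x := by
  ext i; fin_cases i <;> (simp [cross3, cross_apply]; try ring)

private lemma c3_add_left (x y z : EuclideanSpace ℝ (Fin 3)) :
    cross3 (x + y) z = cross3 x z + cross3 y z := by
  ext i; fin_cases i <;> (simp [cross3, cross_apply]; try ring)

private lemma c3_add_right (x y z : EuclideanSpace ℝ (Fin 3)) :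
    cross3 x (y + z) = cross3 x y + cross3 x z := by
  ext i; fin_cases i <;> (simp [cross3, cross_apply]; try ring)

private lemma c3_sub_left (x y z : EuclideanSpace ℝ (Fin 3)) :
    cross3 (x - y) z = cross3 x z - cross3 y z := by
  ext i; fin_cases i <;> (simp [cross3, cross_apply]; try ring)

private lemma c3_sub_right (x y z : EuclideanSpace ℝ (Fin 3)) :
    cross3 x (y - z) = cross3 x y - cross3 x z := by
  ext i; fin_cases i <;> (simp [cross3, cross_apply]; try ring)

private lemma c3_smul_left (r : ℝ) (x y : EuclideanSpace ℝ (Fin 3)) :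
    cross3 (r • x) y = r • cross3 x y := by
  ext i; fin_cases i <;> (simp [cross3, cross_apply]; try ring)

private lemma c3_smul_right (r : ℝ) (x y : EuclideanSpace ℝ (Fin 3)) :
    cross3 x (r • y) = r • cross3 x y := by
  ext i; fin_cases i <;> (simp [cross3, cross_apply]; try ring)

private lemma c3_inner_left (x y : EuclideanSpace ℝ (Fin 3)) : ⟪x, cross3 x y⟫ = 0 := by
  simp [cross3, cross_apply, PiLp.inner_apply, Fin.sum_univ_three, RCLike.inner_apply,
    conj_trivial]
  ring

private lemma c3_inner_right (x y : EuclideanSpace ℝ (Fin 3)) : ⟪y, cross3 x y⟫ = 0 := by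
  simp [cross3, cross_apply, PiLp.inner_apply, Fin.sum_univ_three, RCLike.inner_apply,
    conj_trivial]
  ring
set_option maxHeartbeats 1000000

/-- The perturbed frame `(t̃, ñ, b̃)` of formulas (4.8a)–(4.8c) built from an
orthonormal frame `(t, n, b)` and the perturbed unit tangent `t̃` is again an
orthonormal frame with `t̃ × ñ = b̃`. -/
theorem perturbed_frame_orthonormal
    (t n : EuclideanSpace ℝ (Fin 3)) (htu : ‖t‖ = 1) (hnu : ‖n‖ = 1)
    (htn : ⟪t, n⟫ = 0) (b : EuclideanSpace ℝ (Fin 3)) (hb : b = cross3 t n)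
    (t' : EuclideanSpace ℝ (Fin 3)) (ht'u : ‖t'‖ = 1) (htt' : ⟪t, t'⟫ ≠ -1)
    (n' b' : EuclideanSpace ℝ (Fin 3))
    (hn' : n' = ⟪t, t'⟫ • n - (⟪b, t'⟫ / (1 + ⟪t, t'⟫)) • cross3 t t' - ⟪n, t'⟫ • t)
    (hb' : b' = ⟪t, t'⟫ • b + (⟪n, t'⟫ / (1 + ⟪t, t'⟫)) • cross3 t t' - ⟪b, t'⟫ • t) :
    ‖n'‖ = 1 ∧ ‖b'‖ = 1 ∧ ⟪t', n'⟫ = 0 ∧ ⟪t', b'⟫ = 0 ∧ ⟪n', b'⟫ = 0 ∧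
      b' = cross3 t' n' := by
  have htt : ⟪t, t⟫ = 1 := by rw [real_inner_self_eq_norm_sq, htu]; norm_num
  have hnn : ⟪n, n⟫ = 1 := by rw [real_inner_self_eq_norm_sq, hnu]; norm_num
  have ht't' : ⟪t', t'⟫ = 1 := by rw [real_inner_self_eq_norm_sq, ht'u]; norm_num
  have hnt : ⟪n, t⟫ = 0 := by rw [real_inner_comm]; exact htn
  set c : ℝ := ⟪t, t'⟫ with hc
  set α : ℝ := ⟪n, t'⟫ with hα
  set β : ℝ := ⟪b, t'⟫ with hβ
  have hs : (1 : ℝ) + c ≠ 0 := fun h => htt' (by linarith)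
  have htb : ⟪t, b⟫ = 0 := by rw [hb]; exact c3_inner_left t n
  have hnb : ⟪n, b⟫ = 0 := by rw [hb]; exact c3_inner_right t n
  have hbt : ⟪b, t⟫ = 0 := by rw [real_inner_comm]; exact htb
  have hbn : ⟪b, n⟫ = 0 := by rw [real_inner_comm]; exact hnb
  have hbb : ⟪b, b⟫ = 1 := by rw [hb, c3_lagrange, htt, hnn, htn, hnt]; ring
  -- cross product multiplication table
  have cnb : cross3 n b = t := by
    rw [hb, c3_triple, hnn, hnt, one_smul, zero_smul, sub_zero]
  have ctb : cross3 t b = -n := by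
    rw [hb, c3_triple, htn, htt, one_smul, zero_smul, zero_sub]
  have cbt : cross3 b t = n := by rw [c3_anticomm, ctb, neg_neg]
  have cbn : cross3 b n = -t := by rw [c3_anticomm, cnb]
  have cnt : cross3 n t = -b := by rw [c3_anticomm, ← hb]
  -- decomposition of w := cross3 t t'
  have hβ2 : ⟪t', b⟫ = β := by rw [real_inner_comm]
  have hα2 : ⟪t', n⟫ = α := by rw [real_inner_comm]
  have hc2 : ⟪t', t⟫ = c := by rw [real_inner_comm]
  have hnw : ⟪n, cross3 t t'⟫ = -β := by
    rw [c3_cyclic, cnt, inner_neg_right, hβ2]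
  have hbw : ⟪b, cross3 t t'⟫ = α := by
    rw [c3_cyclic, cbt, hα2]
  have hw : cross3 t t' = α • b - β • n := by
    have hu : cross3 t t' - (α • b - β • n) = 0 := by
      rw [← inner_self_eq_zero (𝕜 := ℝ)]
      have hcross : cross3 n (cross3 t t' - (α • b - β • n)) = 0 := by
        rw [c3_sub_right, c3_sub_right, c3_smul_right, c3_smul_right, c3_triple,
          cnb, c3_self, hnt, ← hα, zero_smul, sub_zero, smul_zero, sub_zero, sub_self]
      have hlin : ⟪n, cross3 t t' - (α • b - β • n)⟫ = 0 := by
        simp [inner_sub_right, inner_smul_right, hnw, hnb, hnn, hnu]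
      have hlag := c3_lagrange n (cross3 t t' - (α • b - β • n)) n
        (cross3 t t' - (α • b - β • n))
      rw [hcross] at hlag
      rw [real_inner_comm] at hlin
      simp only [inner_zero_left, hnn, one_mul, hlin, mul_zero, sub_zero] at hlag
      exact hlag.symm
    exact sub_eq_zero.mp hu
  have hww : ⟪cross3 t t', cross3 t t'⟫ = 1 - c^2 := by
    rw [c3_lagrange, htt, ht't', hc2]; ring
  have hkey : α^2 + β^2 = 1 - c^2 := by
    rw [hw] at hww
    simp only [inner_sub_left, inner_sub_right, real_inner_smul_left,
      real_inner_smul_right, hbb, hnn, hnb, hbn] at hww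
    linear_combination hww
  have ht'dec : t' = c • t + α • n + β • b := by
    have h4 : cross3 t (cross3 t t') = c • t - t' := by
      rw [c3_triple, htt, one_smul, ← hc]
    have h5 : cross3 t (cross3 t t') = -(α • n) - β • b := by
      rw [hw, c3_sub_right, c3_smul_right, c3_smul_right, ctb, ← hb, smul_neg]
    have h6 := h4.symm.trans h5
    linear_combination (norm := module) -h6
  rw [hw] at hn' hb'
  have g1 : ⟪n', n'⟫ = 1 := by
    rw [hn']
    simp only [inner_sub_left, inner_sub_right, real_inner_smul_left, real_inner_smul_right,
      htt, hnn, hbb, htn, hnt, htb, hbt, hnb, hbn]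
    field_simp
    linear_combination (β^2 + (1+c)^2) * hkey
  have g2 : ⟪b', b'⟫ = 1 := by
    rw [hb']
    simp only [inner_sub_left, inner_sub_right, inner_add_left, inner_add_right,
      real_inner_smul_left, real_inner_smul_right,
      htt, hnn, hbb, htn, hnt, htb, hbt, hnb, hbn]
    field_simp
    linear_combination (α^2 + (1+c)^2) * hkey
  refine ⟨?_, ?_, ?_, ?_, ?_, ?_⟩
  · have hns := real_inner_self_eq_norm_sq n'
    rw [g1] at hns
    nlinarith [norm_nonneg n']
  · have hns := real_inner_self_eq_norm_sq b'
    rw [g2] at hns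
    nlinarith [norm_nonneg b']
  · rw [hn', ht'dec]
    simp only [inner_sub_left, inner_sub_right, inner_add_left, inner_add_right,
      real_inner_smul_left, real_inner_smul_right,
      htt, hnn, hbb, htn, hnt, htb, hbt, hnb, hbn]
    field_simp
    ring
  · rw [hb', ht'dec]
    simp only [inner_sub_left, inner_sub_right, inner_add_left, inner_add_right,
      real_inner_smul_left, real_inner_smul_right,
      htt, hnn, hbb, htn, hnt, htb, hbt, hnb, hbn]
    field_simp
    ring
  · rw [hn', hb']
    simp only [inner_sub_left, inner_sub_right, inner_add_left, inner_add_right,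
      real_inner_smul_left, real_inner_smul_right,
      htt, hnn, hbb, htn, hnt, htb, hbt, hnb, hbn]
    field_simp
    linear_combination (-(α*β)) * hkey
  · rw [hb', hn', ht'dec]
    simp only [c3_add_left, c3_add_right, c3_sub_left, c3_sub_right, c3_smul_left,
      c3_smul_right, c3_self, cnb, ctb, cbt, cbn, cnt, ← hb, smul_neg, smul_zero,
      smul_smul, neg_smul, sub_zero, zero_sub, add_zero, zero_add]
    match_scalars
    · field_simp
      linear_combination (-c) * hkey
    · field_simp
      linear_combination 0 * hkey
    · field_simp
      linear_combination β * hkey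
end

section
/- Let n ≥ 1, let F be a complex n×n matrix, and let P be a complex n×n matrix with P* = P and P² = P; set Q := 1 − P. Then ( ( ‖PFP‖_F − ‖QFQ‖_F )² + ( ‖QFP‖_F − ‖PFQ‖_F )² )^{1/2} ≤ ‖F‖_F. -/
open BigOperators Finset

/-- The Frobenius norm of a complex `n × n` matrix. -/
noncomputable def frobeniusNorm' {n : ℕ} (A : Matrix (Fin n) (Fin n) ℂ) : ℝ :=
  Real.sqrt (∑ i, ∑ j, ‖A i j‖ ^ 2)

noncomputable def frobSq {n : ℕ} (A : Matrix (Fin n) (Fin n) ℂ) : ℝ :=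
  (Matrix.trace (A.conjTranspose * A)).re

lemma frobSq_eq {n : ℕ} (A : Matrix (Fin n) (Fin n) ℂ) :
    frobSq A = ∑ i, ∑ j, ‖A i j‖ ^ 2 := by
  simp only [frobSq, Matrix.trace, Matrix.diag, Matrix.mul_apply,
    Matrix.conjTranspose_apply, Complex.re_sum]
  rw [Finset.sum_comm]
  refine Finset.sum_congr rfl fun i _ => Finset.sum_congr rfl fun j _ => ?_
  rw [show star (A i j) = (starRingEnd ℂ) (A i j) from rfl, mul_comm, Complex.mul_conj]
  rw [Complex.ofReal_re, ← Complex.sq_norm]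

lemma frobSq_nonneg {n : ℕ} (A : Matrix (Fin n) (Fin n) ℂ) : 0 ≤ frobSq A := by
  rw [frobSq_eq]; positivity

lemma frob_eq {n : ℕ} (A : Matrix (Fin n) (Fin n) ℂ) :
    frobeniusNorm' A = Real.sqrt (frobSq A) := by
  rw [frobeniusNorm', frobSq_eq]

lemma frob_sq {n : ℕ} (A : Matrix (Fin n) (Fin n) ℂ) :
    frobeniusNorm' A ^ 2 = frobSq A := by
  rw [frob_eq, Real.sq_sqrt (frobSq_nonneg A)]

lemma frob_nonneg {n : ℕ} (A : Matrix (Fin n) (Fin n) ℂ) : 0 ≤ frobeniusNorm' A := by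
  rw [frob_eq]; exact Real.sqrt_nonneg _

lemma left_split {n : ℕ} (P Q A : Matrix (Fin n) (Fin n) ℂ)
    (hPsa : P.conjTranspose = P) (hPproj : P * P = P)
    (hQsa : Q.conjTranspose = Q) (hQproj : Q * Q = Q)
    (hPQ : P + Q = 1) :
    frobSq (P * A) + frobSq (Q * A) = frobSq A := by
  unfold frobSq
  rw [← Complex.add_re]
  congr 1
  rw [← Matrix.trace_add, Matrix.conjTranspose_mul, Matrix.conjTranspose_mul, hPsa, hQsa]
  congr 1
  have e1 : A.conjTranspose * P * (P * A) = A.conjTranspose * (P * A) := by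
    rw [show A.conjTranspose * P * (P * A) = A.conjTranspose * (P * P * A) by noncomm_ring,
      hPproj]
  have e2 : A.conjTranspose * Q * (Q * A) = A.conjTranspose * (Q * A) := by
    rw [show A.conjTranspose * Q * (Q * A) = A.conjTranspose * (Q * Q * A) by noncomm_ring,
      hQproj]
  rw [e1, e2, ← Matrix.mul_add, ← Matrix.add_mul, hPQ, Matrix.one_mul]

lemma right_split {n : ℕ} (P Q A : Matrix (Fin n) (Fin n) ℂ)
    (hPsa : P.conjTranspose = P) (hPproj : P * P = P)
    (hQsa : Q.conjTranspose = Q) (hQproj : Q * Q = Q)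
    (hPQ : P + Q = 1) :
    frobSq (A * P) + frobSq (A * Q) = frobSq A := by
  unfold frobSq
  rw [← Complex.add_re]
  congr 1
  have h1 : ((A * P).conjTranspose * (A * P)).trace = (A.conjTranspose * A * P).trace := by
    rw [Matrix.conjTranspose_mul, hPsa,
      show P * A.conjTranspose * (A * P) = P * (A.conjTranspose * A * P) by noncomm_ring,
      Matrix.trace_mul_comm, mul_assoc (A.conjTranspose * A) P P, hPproj]
  have h2 : ((A * Q).conjTranspose * (A * Q)).trace = (A.conjTranspose * A * Q).trace := by
    rw [Matrix.conjTranspose_mul, hQsa,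
      show Q * A.conjTranspose * (A * Q) = Q * (A.conjTranspose * A * Q) by noncomm_ring,
      Matrix.trace_mul_comm, mul_assoc (A.conjTranspose * A) Q Q, hQproj]
  rw [h1, h2, ← Matrix.trace_add, ← Matrix.mul_add, hPQ, Matrix.mul_one]

/-- The chirality measure bound `χ_HS(F) ≤ ‖F‖_HS` of (3.7): the smooth
electromagnetic chirality measure of `F` with respect to the orthogonal
projections `P` and `Q = 1 − P` is at most the Frobenius norm of `F`. -/
theorem chiHS_le_frobenius_norm
    (n : ℕ) (hn : 1 ≤ n)
    (F P : Matrix (Fin n) (Fin n) ℂ)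
    (hPsa : P.conjTranspose = P) (hPproj : P * P = P)
    (Q : Matrix (Fin n) (Fin n) ℂ) (hQ : Q = 1 - P) :
    Real.sqrt ((frobeniusNorm' (P * F * P) - frobeniusNorm' (Q * F * Q)) ^ 2 +
        (frobeniusNorm' (Q * F * P) - frobeniusNorm' (P * F * Q)) ^ 2) ≤
      frobeniusNorm' F := by
  have hQsa : Q.conjTranspose = Q := by
    rw [hQ, Matrix.conjTranspose_sub, hPsa, Matrix.conjTranspose_one]
  have hQproj : Q * Q = Q := by
    rw [hQ]; simp [sub_mul, mul_sub, hPproj]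
  have hPQ : P + Q = 1 := by rw [hQ]; abel
  have key : frobSq (P * F * P) + frobSq (P * F * Q) + (frobSq (Q * F * P) + frobSq (Q * F * Q))
      = frobSq F := by
    rw [right_split P Q (P * F) hPsa hPproj hQsa hQproj hPQ,
      right_split P Q (Q * F) hPsa hPproj hQsa hQproj hPQ,
      left_split P Q F hPsa hPproj hQsa hQproj hPQ]
  set a := frobeniusNorm' (P * F * P)
  set b := frobeniusNorm' (Q * F * Q)
  set c := frobeniusNorm' (Q * F * P)
  set d := frobeniusNorm' (P * F * Q)
  have ha : 0 ≤ a := frob_nonneg _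
  have hb : 0 ≤ b := frob_nonneg _
  have hc : 0 ≤ c := frob_nonneg _
  have hd : 0 ≤ d := frob_nonneg _
  have hF : frobeniusNorm' F = Real.sqrt (a ^ 2 + d ^ 2 + (c ^ 2 + b ^ 2)) := by
    rw [frob_eq F, ← key, frob_sq, frob_sq, frob_sq, frob_sq]
  rw [hF]
  apply Real.sqrt_le_sqrt
  nlinarith [mul_nonneg ha hb, mul_nonneg hc hd]
end

section
/- Let L > 0, let x̂ ∈ ℝ³ be a unit vector, let k > 0, and let Π be the complex 3×3 matrix representing the map v ↦ (x̂ × v) × x̂ = v − (x̂·v)·x̂ (extended complex-linearly). Let p, h : [0, L] → ℝ³ be continuously differentiable with p′(t) ≠ 0 for all t ∈ [0, L], let M, M′ : [0, L] → ℂ^{3×3} be continuous, and let E : ℝ³ → ℂ³ be continuously differentiable with derivative DE. Then the ℂ³-valued function g(s) := ∫₀^L e^{−ik x̂·(p(t)+s h(t))} Π (M(t) + s M′(t)) E(p(t)+s h(t)) ‖p′(t)+s h′(t)‖ dt is differentiable at s = 0 with g′(0) = −∫₀^L ik (x̂·h) e^{−ik x̂·p} Π M E(p) ‖p′‖ dt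 + ∫₀^L e^{−ik x̂·p} Π M′ E(p) ‖p′‖ dt + ∫₀^L e^{−ik x̂·p} Π M (DE(p)h) ‖p′‖ dt + ∫₀^L e^{−ik x̂·p} Π M E(p) (p′·h′)/‖p′‖ dt (all integrands evaluated at t). -/
open BigOperators Finset intervalIntegral
open scoped Matrix RealInnerProductSpace

lemma hasDerivAt_norm_aux {E : Type*} [NormedAddCommGroup E] [InnerProductSpace ℝ E]
    {f : ℝ → E} {f' : E} {x : ℝ} (hf : HasDerivAt f f' x) (h0 : f x ≠ 0) :
    HasDerivAt (fun y => ‖f y‖) (⟪f x, f'⟫ / ‖f x‖) x := by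
  have hii : HasDerivAt (fun y => ⟪f y, f y⟫) (⟪f x, f'⟫ + ⟪f', f x⟫) x := hf.inner ℝ hf
  have hsq : (⟪f x, f x⟫ : ℝ) ≠ 0 := fun hc => h0 (inner_self_eq_zero.mp hc)
  have := (Real.hasDerivAt_sqrt hsq).comp x hii
  have hnorm : (fun y => Real.sqrt ⟪f y, f y⟫) = fun y => ‖f y‖ := by
    funext y; rw [real_inner_self_eq_norm_sq, Real.sqrt_sq (norm_nonneg _)]
  rw [Function.comp_def, hnorm] at this
  refine this.congr_deriv ?_
  rw [real_inner_comm (f') (f x), real_inner_self_eq_norm_sq, Real.sqrt_sq (norm_nonneg _)]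
  have h0' : ‖f x‖ ≠ 0 := norm_ne_zero_iff.2 h0
  field_simp
  ring

lemma hasDerivAt_const_mulVec {A : Matrix (Fin 3) (Fin 3) ℂ} {f : ℝ → Fin 3 → ℂ}
    {f' : Fin 3 → ℂ} {x : ℝ} (hf : HasDerivAt f f' x) :
    HasDerivAt (fun y => A.mulVec (f y)) (A.mulVec f') x := by
  have := (LinearMap.toContinuousLinearMap
    ((Matrix.mulVecLin A).restrictScalars ℝ)).hasFDerivAt.comp_hasDerivAt x hf
  exact this

lemma contOn_mulVec {X : Type*} [TopologicalSpace X] {S : Set X}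
    {A : X → Matrix (Fin 3) (Fin 3) ℂ} {v : X → Fin 3 → ℂ}
    (hA : ContinuousOn A S) (hv : ContinuousOn v S) :
    ContinuousOn (fun z => (A z).mulVec (v z)) S := by
  fun_prop

lemma farfield_pointwise_deriv
    (xh : EuclideanSpace ℝ (Fin 3)) (k : ℝ) (Pi3 : Matrix (Fin 3) (Fin 3) ℂ)
    (P H P' H' : EuclideanSpace ℝ (Fin 3)) (Mt M't : Matrix (Fin 3) (Fin 3) ℂ)
    (E : EuclideanSpace ℝ (Fin 3) → Fin 3 → ℂ) (hE : ContDiff ℝ 1 E)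
    (s : ℝ) (hne : P' + s • H' ≠ 0) :
    HasDerivAt (fun y =>
      (Complex.exp (-Complex.I * (k : ℂ) * ((⟪xh, P + y • H⟫ : ℝ) : ℂ)) *
          ((‖P' + y • H'‖ : ℝ) : ℂ)) •
        Pi3.mulVec ((Mt + y • M't).mulVec (E (P + y • H))))
      (((-(Complex.I * (k : ℂ) * ((⟪xh, H⟫ : ℝ) : ℂ)) *
            Complex.exp (-Complex.I * (k : ℂ) * ((⟪xh, P + s • H⟫ : ℝ) : ℂ))) *
            ((‖P' + s • H'‖ : ℝ) : ℂ) +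
          Complex.exp (-Complex.I * (k : ℂ) * ((⟪xh, P + s • H⟫ : ℝ) : ℂ)) *
            (((⟪P' + s • H', H'⟫ / ‖P' + s • H'‖ : ℝ)) : ℂ)) •
          Pi3.mulVec ((Mt + s • M't).mulVec (E (P + s • H))) +
        (Complex.exp (-Complex.I * (k : ℂ) * ((⟪xh, P + s • H⟫ : ℝ) : ℂ)) *
            ((‖P' + s • H'‖ : ℝ) : ℂ)) •
          Pi3.mulVec (M't.mulVec (E (P + s • H)) +
            (Mt + s • M't).mulVec (fderiv ℝ E (P + s • H) H)))
      s := by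
  have hq : HasDerivAt (fun y : ℝ => P + y • H) H s := by
    simpa using ((hasDerivAt_id s).smul_const H).const_add P
  have hu : HasDerivAt (fun y : ℝ => P' + y • H') H' s := by
    simpa using ((hasDerivAt_id s).smul_const H').const_add P'
  have hφ : HasDerivAt (fun y : ℝ => (⟪xh, P + y • H⟫ : ℝ)) (⟪xh, H⟫ : ℝ) s := by
    simpa using (hasDerivAt_const s xh).inner ℝ hq
  have hφC : HasDerivAt (fun y : ℝ => ((⟪xh, P + y • H⟫ : ℝ) : ℂ)) ((⟪xh, H⟫ : ℝ) : ℂ) s :=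
    hφ.ofReal_comp
  have hexp : HasDerivAt
      (fun y : ℝ => Complex.exp (-Complex.I * (k : ℂ) * ((⟪xh, P + y • H⟫ : ℝ) : ℂ)))
      (Complex.exp (-Complex.I * (k : ℂ) * ((⟪xh, P + s • H⟫ : ℝ) : ℂ)) *
        (-Complex.I * (k : ℂ) * ((⟪xh, H⟫ : ℝ) : ℂ))) s := by
    have := (hφC.const_mul (-Complex.I * (k : ℂ))).cexp
    simpa [mul_assoc, mul_comm, mul_left_comm] using this
  have hn : HasDerivAt (fun y : ℝ => ‖P' + y • H'‖)
      ((⟪P' + s • H', H'⟫ : ℝ) / ‖P' + s • H'‖) s := hasDerivAt_norm_aux hu hne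
  have hnC : HasDerivAt (fun y : ℝ => ((‖P' + y • H'‖ : ℝ) : ℂ))
      (((⟪P' + s • H', H'⟫ / ‖P' + s • H'‖ : ℝ)) : ℂ) s := hn.ofReal_comp
  have hc : HasDerivAt
      (fun y : ℝ => Complex.exp (-Complex.I * (k : ℂ) * ((⟪xh, P + y • H⟫ : ℝ) : ℂ)) *
        ((‖P' + y • H'‖ : ℝ) : ℂ))
      (-(Complex.I * (k : ℂ) * ((⟪xh, H⟫ : ℝ) : ℂ)) *
            Complex.exp (-Complex.I * (k : ℂ) * ((⟪xh, P + s • H⟫ : ℝ) : ℂ)) *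
            ((‖P' + s • H'‖ : ℝ) : ℂ) +
          Complex.exp (-Complex.I * (k : ℂ) * ((⟪xh, P + s • H⟫ : ℝ) : ℂ)) *
            (((⟪P' + s • H', H'⟫ / ‖P' + s • H'‖ : ℝ)) : ℂ)) s := by
    have := hexp.mul hnC
    refine this.congr_deriv ?_
    ring
  have hv : HasDerivAt (fun y : ℝ => E (P + y • H)) (fderiv ℝ E (P + s • H) H) s :=
    ((hE.differentiable one_ne_zero) (P + s • H)).hasFDerivAt.comp_hasDerivAt s hq
  have h1 : HasDerivAt (fun y : ℝ => Mt.mulVec (E (P + y • H)))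
      (Mt.mulVec (fderiv ℝ E (P + s • H) H)) s := hasDerivAt_const_mulVec hv
  have h2 : HasDerivAt (fun y : ℝ => M't.mulVec (E (P + y • H)))
      (M't.mulVec (fderiv ℝ E (P + s • H) H)) s := hasDerivAt_const_mulVec hv
  have h3 : HasDerivAt (fun y : ℝ => y • M't.mulVec (E (P + y • H)))
      (M't.mulVec (E (P + s • H)) + s • M't.mulVec (fderiv ℝ E (P + s • H) H)) s := by
    have := (hasDerivAt_id s).smul h2
    simp only [one_smul] at this
    refine this.congr_deriv ?_
    simp only [id]
    abel
  have hAv : HasDerivAt (fun y : ℝ => (Mt + y • M't).mulVec (E (P + y • H)))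
      (M't.mulVec (E (P + s • H)) + (Mt + s • M't).mulVec (fderiv ℝ E (P + s • H) H)) s := by
    have hfun : (fun y : ℝ => (Mt + y • M't).mulVec (E (P + y • H))) =
        fun y : ℝ => Mt.mulVec (E (P + y • H)) + y • M't.mulVec (E (P + y • H)) := by
      funext y; rw [Matrix.add_mulVec, Matrix.smul_mulVec]
    rw [hfun]
    have := h1.add h3
    refine this.congr_deriv ?_
    rw [Matrix.add_mulVec, Matrix.smul_mulVec]
    abel
  have hW : HasDerivAt (fun y : ℝ => Pi3.mulVec ((Mt + y • M't).mulVec (E (P + y • H))))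
      (Pi3.mulVec (M't.mulVec (E (P + s • H)) +
        (Mt + s • M't).mulVec (fderiv ℝ E (P + s • H) H))) s := hasDerivAt_const_mulVec hAv
  have := hc.smul hW
  refine this.congr_deriv ?_
  abel

set_option maxHeartbeats 2000000 in
/-- Theorem 4.2, directional form: the Gateaux derivative of the leading-order far
field of a thin nanowire, at a fixed observation direction `x̂`, is the sum of the
four terms accounting for the variation of the phase, of the polarization tensor,
of the incident field along the curve, and of the arc length element. -/
theorem farfield_gateaux_derivative
    (L : ℝ) (hL : 0 < L)
    (xh : EuclideanSpace ℝ (Fin 3)) (hxh : ‖xh‖ = 1)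
    (k : ℝ) (hk : 0 < k)
    (Pi3 : Matrix (Fin 3) (Fin 3) ℂ)
    (hPi3 : ∀ v : Fin 3 → ℂ,
      Pi3.mulVec v = ((fun i => (xh i : ℂ)) ⨯₃ v) ⨯₃ (fun i => (xh i : ℂ)))
    (p h : ℝ → EuclideanSpace ℝ (Fin 3))
    (p' h' : ℝ → EuclideanSpace ℝ (Fin 3))
    (hp : ∀ t ∈ Set.Icc (0 : ℝ) L, HasDerivAt p (p' t) t)
    (hp'c : ContinuousOn p' (Set.Icc (0 : ℝ) L))
    (hp'0 : ∀ t ∈ Set.Icc (0 : ℝ) L, p' t ≠ 0)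
    (hh : ∀ t ∈ Set.Icc (0 : ℝ) L, HasDerivAt h (h' t) t)
    (hh'c : ContinuousOn h' (Set.Icc (0 : ℝ) L))
    (M M' : ℝ → Matrix (Fin 3) (Fin 3) ℂ)
    (hM : ContinuousOn M (Set.Icc (0 : ℝ) L))
    (hM' : ContinuousOn M' (Set.Icc (0 : ℝ) L))
    (E : EuclideanSpace ℝ (Fin 3) → Fin 3 → ℂ) (hE : ContDiff ℝ 1 E)
    (g : ℝ → Fin 3 → ℂ)
    (hg : g = fun s => ∫ t in (0 : ℝ)..L,
      (Complex.exp (-Complex.I * (k : ℂ) * ((⟪xh, p t + s • h t⟫ : ℝ) : ℂ)) *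
          ((‖p' t + s • h' t‖ : ℝ) : ℂ)) •
        Pi3.mulVec ((M t + s • M' t).mulVec (E (p t + s • h t)))) :
    HasDerivAt g
      ((∫ t in (0 : ℝ)..L,
          (-(Complex.I * (k : ℂ) * ((⟪xh, h t⟫ : ℝ) : ℂ)) *
              Complex.exp (-Complex.I * (k : ℂ) * ((⟪xh, p t⟫ : ℝ) : ℂ)) *
              ((‖p' t‖ : ℝ) : ℂ)) •
            Pi3.mulVec ((M t).mulVec (E (p t)))) +
        (∫ t in (0 : ℝ)..L,
          (Complex.exp (-Complex.I * (k : ℂ) * ((⟪xh, p t⟫ : ℝ) : ℂ)) *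
              ((‖p' t‖ : ℝ) : ℂ)) •
            Pi3.mulVec ((M' t).mulVec (E (p t)))) +
        (∫ t in (0 : ℝ)..L,
          (Complex.exp (-Complex.I * (k : ℂ) * ((⟪xh, p t⟫ : ℝ) : ℂ)) *
              ((‖p' t‖ : ℝ) : ℂ)) •
            Pi3.mulVec ((M t).mulVec (fderiv ℝ E (p t) (h t)))) +
        (∫ t in (0 : ℝ)..L,
          (Complex.exp (-Complex.I * (k : ℂ) * ((⟪xh, p t⟫ : ℝ) : ℂ)) *
              (((⟪p' t, h' t⟫ / ‖p' t‖ : ℝ)) : ℂ)) •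
            Pi3.mulVec ((M t).mulVec (E (p t)))))
      0 := by
  subst hg
  have hIc : IsCompact (Set.Icc (0 : ℝ) L) := isCompact_Icc
  have h0mem : (0 : ℝ) ∈ Set.Icc (0 : ℝ) L := Set.left_mem_Icc.2 hL.le
  have hpc : ContinuousOn p (Set.Icc (0 : ℝ) L) :=
    fun t ht => (hp t ht).continuousAt.continuousWithinAt
  have hhc : ContinuousOn h (Set.Icc (0 : ℝ) L) :=
    fun t ht => (hh t ht).continuousAt.continuousWithinAt
  -- minimum of ‖p'‖
  obtain ⟨t₀, ht₀, hmin⟩ := hIc.exists_isMinOn ⟨0, h0mem⟩ hp'c.norm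
  set m : ℝ := ‖p' t₀‖ with hm_def
  have hm : 0 < m := norm_pos_iff.2 (hp'0 t₀ ht₀)
  have hmle : ∀ t ∈ Set.Icc (0 : ℝ) L, m ≤ ‖p' t‖ := fun t ht => hmin ht
  -- bound on ‖h'‖
  obtain ⟨Hh, hHh⟩ := hIc.exists_bound_of_continuousOn hh'c
  have hHh0 : 0 ≤ Hh := le_trans (norm_nonneg _) (hHh 0 h0mem)
  set ε : ℝ := m / (2 * (Hh + 1)) with hε_def
  have hε : 0 < ε := div_pos hm (by linarith)
  have hu_lower : ∀ s : ℝ, |s| ≤ ε → ∀ t ∈ Set.Icc (0 : ℝ) L,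
      m / 2 ≤ ‖p' t + s • h' t‖ := by
    intro s hs t ht
    have h1 : ‖p' t‖ ≤ ‖p' t + s • h' t‖ + ‖s • h' t‖ := by
      calc ‖p' t‖ = ‖(p' t + s • h' t) + (-(s • h' t))‖ := by rw [add_neg_cancel_right]
        _ ≤ ‖p' t + s • h' t‖ + ‖-(s • h' t)‖ := norm_add_le _ _
        _ = ‖p' t + s • h' t‖ + ‖s • h' t‖ := by rw [norm_neg]
    have h2 : ‖s • h' t‖ ≤ ε * (Hh + 1) := by
      rw [norm_smul, Real.norm_eq_abs]
      have := hHh t ht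
      have habs : 0 ≤ |s| := abs_nonneg s
      nlinarith
    have h3 : ε * (Hh + 1) = m / 2 := by
      rw [hε_def]; field_simp
    have := hmle t ht
    linarith
  have hne : ∀ s : ℝ, |s| ≤ ε → ∀ t ∈ Set.Icc (0 : ℝ) L, p' t + s • h' t ≠ 0 := by
    intro s hs t ht
    have := hu_lower s hs t ht
    intro hc
    rw [hc, norm_zero] at this
    linarith
  -- the derivative candidate
  set F' : ℝ → ℝ → Fin 3 → ℂ := fun s t =>
    ((-(Complex.I * (k : ℂ) * ((⟪xh, h t⟫ : ℝ) : ℂ)) *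
          Complex.exp (-Complex.I * (k : ℂ) * ((⟪xh, p t + s • h t⟫ : ℝ) : ℂ))) *
          ((‖p' t + s • h' t‖ : ℝ) : ℂ) +
        Complex.exp (-Complex.I * (k : ℂ) * ((⟪xh, p t + s • h t⟫ : ℝ) : ℂ)) *
          (((⟪p' t + s • h' t, h' t⟫ / ‖p' t + s • h' t‖ : ℝ)) : ℂ)) •
        Pi3.mulVec ((M t + s • M' t).mulVec (E (p t + s • h t))) +
      (Complex.exp (-Complex.I * (k : ℂ) * ((⟪xh, p t + s • h t⟫ : ℝ) : ℂ)) *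
          ((‖p' t + s • h' t‖ : ℝ) : ℂ)) •
        Pi3.mulVec ((M' t).mulVec (E (p t + s • h t)) +
          (M t + s • M' t).mulVec (fderiv ℝ E (p t + s • h t) (h t))) with hF'def
  -- joint continuity on K
  set K : Set (ℝ × ℝ) := Set.Icc (-ε) ε ×ˢ Set.Icc (0 : ℝ) L with hKdef
  have hKc : IsCompact K := isCompact_Icc.prod hIc
  have hmemK : ∀ z : ℝ × ℝ, z ∈ K → |z.1| ≤ ε ∧ z.2 ∈ Set.Icc (0 : ℝ) L := by
    intro z hz
    exact ⟨abs_le.2 ⟨hz.1.1, hz.1.2⟩, hz.2⟩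
  have hsnd : ContinuousOn (fun z : ℝ × ℝ => z.2) K := continuous_snd.continuousOn
  have hfst : ContinuousOn (fun z : ℝ × ℝ => z.1) K := continuous_fst.continuousOn
  have hPc : ContinuousOn (fun z : ℝ × ℝ => p z.2) K :=
    hpc.comp hsnd fun z hz => (hmemK z hz).2
  have hHcK : ContinuousOn (fun z : ℝ × ℝ => h z.2) K :=
    hhc.comp hsnd fun z hz => (hmemK z hz).2
  have hP'c : ContinuousOn (fun z : ℝ × ℝ => p' z.2) K :=
    hp'c.comp hsnd fun z hz => (hmemK z hz).2
  have hH'c : ContinuousOn (fun z : ℝ × ℝ => h' z.2) K :=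
    hh'c.comp hsnd fun z hz => (hmemK z hz).2
  have hMcK : ContinuousOn (fun z : ℝ × ℝ => M z.2) K :=
    hM.comp hsnd fun z hz => (hmemK z hz).2
  have hM'cK : ContinuousOn (fun z : ℝ × ℝ => M' z.2) K :=
    hM'.comp hsnd fun z hz => (hmemK z hz).2
  have hQc : ContinuousOn (fun z : ℝ × ℝ => p z.2 + z.1 • h z.2) K := hPc.add (hfst.smul hHcK)
  have hUc : ContinuousOn (fun z : ℝ × ℝ => p' z.2 + z.1 • h' z.2) K := hP'c.add (hfst.smul hH'c)
  have hUn0 : ∀ z ∈ K, ‖p' z.2 + z.1 • h' z.2‖ ≠ 0 := by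
    intro z hz
    have := hu_lower z.1 (hmemK z hz).1 z.2 (hmemK z hz).2
    exact (lt_of_lt_of_le (half_pos hm) this).ne'
  have hec : ContinuousOn
      (fun z : ℝ × ℝ => Complex.exp (-Complex.I * (k : ℂ) *
        ((⟪xh, p z.2 + z.1 • h z.2⟫ : ℝ) : ℂ))) K :=
    Complex.continuous_exp.comp_continuousOn
      (continuousOn_const.mul
        (Complex.continuous_ofReal.comp_continuousOn (continuousOn_const.inner hQc)))
  have hnc : ContinuousOn (fun z : ℝ × ℝ => ((‖p' z.2 + z.1 • h' z.2‖ : ℝ) : ℂ)) K :=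
    Complex.continuous_ofReal.comp_continuousOn hUc.norm
  have hEcK : ContinuousOn (fun z : ℝ × ℝ => E (p z.2 + z.1 • h z.2)) K :=
    hE.continuous.comp_continuousOn hQc
  have hDEc : ContinuousOn
      (fun z : ℝ × ℝ => fderiv ℝ E (p z.2 + z.1 • h z.2) (h z.2)) K :=
    ((hE.continuous_fderiv one_ne_zero).comp_continuousOn hQc).clm_apply hHcK
  have hAc : ContinuousOn (fun z : ℝ × ℝ => M z.2 + z.1 • M' z.2) K := hMcK.add (hfst.smul hM'cK)
  have hmv1 : ContinuousOn
      (fun z : ℝ × ℝ => (M z.2 + z.1 • M' z.2).mulVec (E (p z.2 + z.1 • h z.2))) K :=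
    contOn_mulVec hAc hEcK
  have hPiV : ∀ {f : ℝ × ℝ → Fin 3 → ℂ}, ContinuousOn f K →
      ContinuousOn (fun z => Pi3.mulVec (f z)) K := fun {f} hf =>
    contOn_mulVec continuousOn_const hf
  have hmv2 : ContinuousOn
      (fun z : ℝ × ℝ => (M' z.2).mulVec (E (p z.2 + z.1 • h z.2))) K :=
    contOn_mulVec hM'cK hEcK
  have hmv3 : ContinuousOn
      (fun z : ℝ × ℝ => (M z.2 + z.1 • M' z.2).mulVec
        (fderiv ℝ E (p z.2 + z.1 • h z.2) (h z.2))) K :=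
    contOn_mulVec hAc hDEc
  have hdivc : ContinuousOn
      (fun z : ℝ × ℝ => (((⟪p' z.2 + z.1 • h' z.2, h' z.2⟫ / ‖p' z.2 + z.1 • h' z.2‖ : ℝ)) : ℂ)) K :=
    Complex.continuous_ofReal.comp_continuousOn ((hUc.inner hH'c).div hUc.norm hUn0)
  have hinh : ContinuousOn (fun z : ℝ × ℝ =>
      (-(Complex.I * (k : ℂ) * ((⟪xh, h z.2⟫ : ℝ) : ℂ)))) K :=
    (continuousOn_const.mul
      (Complex.continuous_ofReal.comp_continuousOn (continuousOn_const.inner hHcK))).neg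
  have hF'c : ContinuousOn (fun z : ℝ × ℝ => F' z.1 z.2) K := by
    rw [hF'def]
    exact (((hinh.mul hec).mul hnc).add (hec.mul hdivc)).smul (hPiV hmv1) |>.add
      ((hec.mul hnc).smul (hPiV (hmv2.add hmv3)))
  obtain ⟨C, hC⟩ := hKc.exists_bound_of_continuousOn hF'c
  -- joint continuity of F itself
  have hFc : ContinuousOn (fun z : ℝ × ℝ =>
      (Complex.exp (-Complex.I * (k : ℂ) * ((⟪xh, p z.2 + z.1 • h z.2⟫ : ℝ) : ℂ)) *
          ((‖p' z.2 + z.1 • h' z.2‖ : ℝ) : ℂ)) •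
        Pi3.mulVec ((M z.2 + z.1 • M' z.2).mulVec (E (p z.2 + z.1 • h z.2)))) K :=
    (hec.mul hnc).smul (hPiV hmv1)
  have hFsc : ∀ s : ℝ, |s| ≤ ε → ContinuousOn (fun t =>
      (Complex.exp (-Complex.I * (k : ℂ) * ((⟪xh, p t + s • h t⟫ : ℝ) : ℂ)) *
          ((‖p' t + s • h' t‖ : ℝ) : ℂ)) •
        Pi3.mulVec ((M t + s • M' t).mulVec (E (p t + s • h t)))) (Set.Icc (0 : ℝ) L) := by
    intro s hs
    have := hFc.comp ((continuous_const.prodMk continuous_id).continuousOn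
      (s := Set.Icc (0:ℝ) L))
      (fun t ht => Set.mk_mem_prod (abs_le.mp hs |> fun ⟨a,b⟩ => Set.mem_Icc.2 ⟨a,b⟩) ht)
    exact this
  have hF'0c : ContinuousOn (fun t => F' 0 t) (Set.Icc (0 : ℝ) L) := by
    have hmap : ContinuousOn (fun t : ℝ => ((0:ℝ), t)) (Set.Icc (0:ℝ) L) :=
      (continuous_const.prodMk continuous_id).continuousOn
    have := hF'c.comp hmap
      (fun t ht => Set.mk_mem_prod (Set.mem_Icc.2 ⟨by linarith, by linarith⟩) ht)
    exact this
  -- apply dominated differentiation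
  have hIoc : Set.uIoc (0 : ℝ) L = Set.Ioc 0 L := Set.uIoc_of_le hL.le
  have key : HasDerivAt (fun s : ℝ => ∫ t in (0 : ℝ)..L,
      (Complex.exp (-Complex.I * (k : ℂ) * ((⟪xh, p t + s • h t⟫ : ℝ) : ℂ)) *
          ((‖p' t + s • h' t‖ : ℝ) : ℂ)) •
        Pi3.mulVec ((M t + s • M' t).mulVec (E (p t + s • h t))))
      (∫ t in (0 : ℝ)..L, F' 0 t) 0 := by
    refine (intervalIntegral.hasDerivAt_integral_of_dominated_loc_of_deriv_le
      (F' := F') (bound := fun _ => C) (Metric.ball_mem_nhds (0:ℝ) hε) ?_ ?_ ?_ ?_ ?_ ?_).2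
    · filter_upwards [Metric.ball_mem_nhds (0:ℝ) hε] with s hs
      rw [Real.ball_eq_Ioo] at hs
      have hsab : |s| ≤ ε := by
        rw [abs_le]; constructor <;> [linarith [hs.1]; linarith [hs.2]]
      rw [hIoc]
      exact ((hFsc s hsab).mono Set.Ioc_subset_Icc_self).aestronglyMeasurable measurableSet_Ioc
    · apply ContinuousOn.intervalIntegrable
      rw [Set.uIcc_of_le hL.le]
      exact hFsc 0 (by simpa using hε.le)
    · rw [hIoc]
      exact (hF'0c.mono Set.Ioc_subset_Icc_self).aestronglyMeasurable measurableSet_Ioc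
    · filter_upwards with t ht s hs
      rw [hIoc] at ht
      have hsab : |s| ≤ ε := by
        rw [Metric.mem_ball, Real.dist_eq, sub_zero] at hs
        exact hs.le
      exact hC (s, t) ⟨Set.mem_Icc.2 (abs_le.mp hsab), Set.Ioc_subset_Icc_self ht⟩
    · exact intervalIntegrable_const
    · filter_upwards with t ht s hs
      rw [hIoc] at ht
      have htI : t ∈ Set.Icc (0:ℝ) L := Set.Ioc_subset_Icc_self ht
      have hsab : |s| ≤ ε := by
        rw [Metric.mem_ball, Real.dist_eq, sub_zero] at hs
        exact hs.le
      have := farfield_pointwise_deriv xh k Pi3 (p t) (h t) (p' t) (h' t) (M t) (M' t)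
        E hE s (hne s hsab t htI)
      rw [hF'def]
      exact this
  -- identify the integral of F' 0 with the four-term sum
  -- one-variable continuity pieces at s = 0
  have hec0 : ContinuousOn
      (fun t => Complex.exp (-Complex.I * (k : ℂ) * ((⟪xh, p t⟫ : ℝ) : ℂ)))
      (Set.Icc (0:ℝ) L) :=
    Complex.continuous_exp.comp_continuousOn
      (continuousOn_const.mul
        (Complex.continuous_ofReal.comp_continuousOn (continuousOn_const.inner hpc)))
  have hn0 : ContinuousOn (fun t => ((‖p' t‖ : ℝ) : ℂ)) (Set.Icc (0:ℝ) L) :=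
    Complex.continuous_ofReal.comp_continuousOn hp'c.norm
  have hE0 : ContinuousOn (fun t => E (p t)) (Set.Icc (0:ℝ) L) :=
    hE.continuous.comp_continuousOn hpc
  have hDE0 : ContinuousOn (fun t => fderiv ℝ E (p t) (h t)) (Set.Icc (0:ℝ) L) :=
    ((hE.continuous_fderiv one_ne_zero).comp_continuousOn hpc).clm_apply hhc
  have hmve : ∀ {A : ℝ → Matrix (Fin 3) (Fin 3) ℂ} {v : ℝ → Fin 3 → ℂ},
      ContinuousOn A (Set.Icc (0:ℝ) L) → ContinuousOn v (Set.Icc (0:ℝ) L) →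
      ContinuousOn (fun t => Pi3.mulVec ((A t).mulVec (v t))) (Set.Icc (0:ℝ) L) := by
    intro A v hA hv
    exact contOn_mulVec continuousOn_const (contOn_mulVec hA hv)
  have hX1 : ContinuousOn (fun t => Pi3.mulVec ((M t).mulVec (E (p t)))) _ := hmve hM hE0
  have hX2 : ContinuousOn (fun t => Pi3.mulVec ((M' t).mulVec (E (p t)))) _ := hmve hM' hE0
  have hX3 : ContinuousOn (fun t => Pi3.mulVec ((M t).mulVec (fderiv ℝ E (p t) (h t)))) _ :=
    hmve hM hDE0
  have hd0 : ContinuousOn (fun t => (((⟪p' t, h' t⟫ / ‖p' t‖ : ℝ)) : ℂ)) (Set.Icc (0:ℝ) L) :=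
    Complex.continuous_ofReal.comp_continuousOn
      ((hp'c.inner hh'c).div hp'c.norm (fun t ht => norm_ne_zero_iff.2 (hp'0 t ht)))
  have hs1 : ContinuousOn (fun t =>
      (-(Complex.I * (k : ℂ) * ((⟪xh, h t⟫ : ℝ) : ℂ)) *
          Complex.exp (-Complex.I * (k : ℂ) * ((⟪xh, p t⟫ : ℝ) : ℂ)) *
          ((‖p' t‖ : ℝ) : ℂ))) (Set.Icc (0:ℝ) L) :=
    (((continuousOn_const.mul
      (Complex.continuous_ofReal.comp_continuousOn (continuousOn_const.inner hhc))).neg.mul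
      hec0).mul hn0)
  have hT1 : IntervalIntegrable (fun t =>
      (-(Complex.I * (k : ℂ) * ((⟪xh, h t⟫ : ℝ) : ℂ)) *
          Complex.exp (-Complex.I * (k : ℂ) * ((⟪xh, p t⟫ : ℝ) : ℂ)) *
          ((‖p' t‖ : ℝ) : ℂ)) •
        Pi3.mulVec ((M t).mulVec (E (p t)))) MeasureTheory.volume 0 L := by
    apply ContinuousOn.intervalIntegrable
    rw [Set.uIcc_of_le hL.le]
    exact hs1.smul hX1
  have hT2 : IntervalIntegrable (fun t =>
      (Complex.exp (-Complex.I * (k : ℂ) * ((⟪xh, p t⟫ : ℝ) : ℂ)) *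
          ((‖p' t‖ : ℝ) : ℂ)) •
        Pi3.mulVec ((M' t).mulVec (E (p t)))) MeasureTheory.volume 0 L := by
    apply ContinuousOn.intervalIntegrable
    rw [Set.uIcc_of_le hL.le]
    exact (hec0.mul hn0).smul hX2
  have hT3 : IntervalIntegrable (fun t =>
      (Complex.exp (-Complex.I * (k : ℂ) * ((⟪xh, p t⟫ : ℝ) : ℂ)) *
          ((‖p' t‖ : ℝ) : ℂ)) •
        Pi3.mulVec ((M t).mulVec (fderiv ℝ E (p t) (h t)))) MeasureTheory.volume 0 L := by
    apply ContinuousOn.intervalIntegrable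
    rw [Set.uIcc_of_le hL.le]
    exact (hec0.mul hn0).smul hX3
  have hT4 : IntervalIntegrable (fun t =>
      (Complex.exp (-Complex.I * (k : ℂ) * ((⟪xh, p t⟫ : ℝ) : ℂ)) *
          (((⟪p' t, h' t⟫ / ‖p' t‖ : ℝ)) : ℂ)) •
        Pi3.mulVec ((M t).mulVec (E (p t)))) MeasureTheory.volume 0 L := by
    apply ContinuousOn.intervalIntegrable
    rw [Set.uIcc_of_le hL.le]
    exact (hec0.mul hd0).smul hX1
  have hsplit : ∀ t : ℝ, F' 0 t =
      ((-(Complex.I * (k : ℂ) * ((⟪xh, h t⟫ : ℝ) : ℂ)) *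
          Complex.exp (-Complex.I * (k : ℂ) * ((⟪xh, p t⟫ : ℝ) : ℂ)) *
          ((‖p' t‖ : ℝ) : ℂ)) •
        Pi3.mulVec ((M t).mulVec (E (p t)))) +
      ((Complex.exp (-Complex.I * (k : ℂ) * ((⟪xh, p t⟫ : ℝ) : ℂ)) *
          ((‖p' t‖ : ℝ) : ℂ)) •
        Pi3.mulVec ((M' t).mulVec (E (p t)))) +
      ((Complex.exp (-Complex.I * (k : ℂ) * ((⟪xh, p t⟫ : ℝ) : ℂ)) *
          ((‖p' t‖ : ℝ) : ℂ)) •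
        Pi3.mulVec ((M t).mulVec (fderiv ℝ E (p t) (h t)))) +
      ((Complex.exp (-Complex.I * (k : ℂ) * ((⟪xh, p t⟫ : ℝ) : ℂ)) *
          (((⟪p' t, h' t⟫ / ‖p' t‖ : ℝ)) : ℂ)) •
        Pi3.mulVec ((M t).mulVec (E (p t)))) := by
    intro t
    rw [hF'def]
    simp only [zero_smul, add_zero, Matrix.mulVec_add, smul_add, add_smul]
    module
  have hval : (∫ t in (0 : ℝ)..L, F' 0 t) =
      (∫ t in (0 : ℝ)..L,
          (-(Complex.I * (k : ℂ) * ((⟪xh, h t⟫ : ℝ) : ℂ)) *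
              Complex.exp (-Complex.I * (k : ℂ) * ((⟪xh, p t⟫ : ℝ) : ℂ)) *
              ((‖p' t‖ : ℝ) : ℂ)) •
            Pi3.mulVec ((M t).mulVec (E (p t)))) +
        (∫ t in (0 : ℝ)..L,
          (Complex.exp (-Complex.I * (k : ℂ) * ((⟪xh, p t⟫ : ℝ) : ℂ)) *
              ((‖p' t‖ : ℝ) : ℂ)) •
            Pi3.mulVec ((M' t).mulVec (E (p t)))) +
        (∫ t in (0 : ℝ)..L,
          (Complex.exp (-Complex.I * (k : ℂ) * ((⟪xh, p t⟫ : ℝ) : ℂ)) *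
              ((‖p' t‖ : ℝ) : ℂ)) •
            Pi3.mulVec ((M t).mulVec (fderiv ℝ E (p t) (h t)))) +
        (∫ t in (0 : ℝ)..L,
          (Complex.exp (-Complex.I * (k : ℂ) * ((⟪xh, p t⟫ : ℝ) : ℂ)) *
              (((⟪p' t, h' t⟫ / ‖p' t‖ : ℝ)) : ℂ)) •
            Pi3.mulVec ((M t).mulVec (E (p t)))) := by
    rw [intervalIntegral.integral_congr (fun t _ => hsplit t)]
    rw [intervalIntegral.integral_add ((hT1.add hT2).add hT3) hT4,
      intervalIntegral.integral_add (hT1.add hT2) hT3,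
      intervalIntegral.integral_add hT1 hT2]
  rw [hval] at key
  convert key using 1
end

section
/- Let L > 0 and let p, h : [0, L] → ℝ³ be twice continuously differentiable with p′(t) ≠ 0 for all t ∈ [0, L]. Then the function g(s) := (1/L) ∫₀^L ‖(p′(t)+s h′(t)) × (p″(t)+s h″(t))‖² / ‖p′(t)+s h′(t)‖⁵ dt is differentiable at s = 0 with g′(0) = (1/L) ∫₀^L ( 2 (p″·h″)/‖p′‖³ − 3 ‖p″‖² (p′·h′)/‖p′‖⁵ − 2 (p′·h″ + p″·h′)(p′·p″)/‖p′‖⁵ + 5 (p′·h′)(p′·p″)²/‖p′‖⁷ ) dt (integrand evaluated at t). -/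
open BigOperators Finset intervalIntegral
open scoped Matrix RealInnerProductSpace

abbrev E3 := EuclideanSpace ℝ (Fin 3)

lemma lagrange3 (a b : E3) : ‖cross3 a b‖ ^ 2 = ⟪a,a⟫ * ⟪b,b⟫ - ⟪a,b⟫ ^ 2 := by
  rw [← real_inner_self_eq_norm_sq]
  simp only [cross3, PiLp.inner_apply, RCLike.inner_apply, conj_trivial,
    WithLp.equiv_symm_apply, PiLp.toLp_apply, cross_apply, Fin.sum_univ_three]
  simp only [WithLp.equiv_apply, Matrix.cons_val_zero, Matrix.cons_val_one, Matrix.head_cons,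
    Matrix.cons_val_two, Matrix.tail_cons]
  ring

noncomputable def curvF (a b : E3) : ℝ :=
  (⟪a,a⟫ * ⟪b,b⟫ - ⟪a,b⟫ ^ 2) / (⟪a,a⟫ ^ 2 * Real.sqrt ⟪a,a⟫)

noncomputable def curvF' (a b da db : E3) : ℝ :=
  (((⟪a,da⟫ + ⟪da,a⟫) * ⟪b,b⟫ + ⟪a,a⟫ * (⟪b,db⟫ + ⟪db,b⟫)
      - 2 * ⟪a,b⟫ ^ 1 * (⟪a,db⟫ + ⟪da,b⟫)) * (⟪a,a⟫ ^ 2 * Real.sqrt ⟪a,a⟫)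
    - (⟪a,a⟫ * ⟪b,b⟫ - ⟪a,b⟫ ^ 2) *
        ((2 * ⟪a,a⟫ ^ 1 * (⟪a,da⟫ + ⟪da,a⟫)) * Real.sqrt ⟪a,a⟫
          + ⟪a,a⟫ ^ 2 * ((⟪a,da⟫ + ⟪da,a⟫) / (2 * Real.sqrt ⟪a,a⟫))))
    / (⟪a,a⟫ ^ 2 * Real.sqrt ⟪a,a⟫) ^ 2

lemma curvF_eq (a b : E3) : curvF a b = ‖cross3 a b‖ ^ 2 / ‖a‖ ^ 5 := by
  rw [curvF, lagrange3]
  have h1 : ⟪a,a⟫ = ‖a‖ ^ 2 := real_inner_self_eq_norm_sq a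
  rw [h1, Real.sqrt_sq (norm_nonneg a)]
  ring_nf

lemma hasDerivAt_curvF {A B : ℝ → E3} {dA dB : E3} {s : ℝ}
    (hA : HasDerivAt A dA s) (hB : HasDerivAt B dB s) (h0 : A s ≠ 0) :
    HasDerivAt (fun x => curvF (A x) (B x)) (curvF' (A s) (B s) dA dB) s := by
  have hQ : HasDerivAt (fun x => ⟪A x, A x⟫) (⟪A s, dA⟫ + ⟪dA, A s⟫) s := hA.inner ℝ hA
  have hR : HasDerivAt (fun x => ⟪B x, B x⟫) (⟪B s, dB⟫ + ⟪dB, B s⟫) s := hB.inner ℝ hB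
  have hS : HasDerivAt (fun x => ⟪A x, B x⟫) (⟪A s, dB⟫ + ⟪dA, B s⟫) s := hA.inner ℝ hB
  have hQpos : (0:ℝ) < ⟪A s, A s⟫ := by
    have : (0:ℝ) < ‖A s‖ := norm_pos_iff.2 h0
    rw [real_inner_self_eq_norm_sq]; positivity
  have hQ0 : ⟪A s, A s⟫ ≠ 0 := ne_of_gt hQpos
  have hsqrt : HasDerivAt (fun x => Real.sqrt ⟪A x, A x⟫)
      ((⟪A s, dA⟫ + ⟪dA, A s⟫) / (2 * Real.sqrt ⟪A s, A s⟫)) s := hQ.sqrt hQ0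
  have hN : HasDerivAt (fun x => ⟪A x, A x⟫ * ⟪B x, B x⟫ - ⟪A x, B x⟫ ^ 2)
      ((⟪A s, dA⟫ + ⟪dA, A s⟫) * ⟪B s, B s⟫ + ⟪A s, A s⟫ * (⟪B s, dB⟫ + ⟪dB, B s⟫)
        - 2 * ⟪A s, B s⟫ ^ 1 * (⟪A s, dB⟫ + ⟪dA, B s⟫)) s := (hQ.mul hR).sub (hS.pow 2)
  have hD : HasDerivAt (fun x => ⟪A x, A x⟫ ^ 2 * Real.sqrt ⟪A x, A x⟫)
      ((2 * ⟪A s, A s⟫ ^ 1 * (⟪A s, dA⟫ + ⟪dA, A s⟫)) * Real.sqrt ⟪A s, A s⟫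
        + ⟪A s, A s⟫ ^ 2 * ((⟪A s, dA⟫ + ⟪dA, A s⟫) / (2 * Real.sqrt ⟪A s, A s⟫))) s :=
    (hQ.pow 2).mul hsqrt
  have hD0 : ⟪A s, A s⟫ ^ 2 * Real.sqrt ⟪A s, A s⟫ ≠ 0 := by positivity
  exact hN.div hD hD0

lemma curvF'_eval (a b da db : E3) (h0 : a ≠ 0) :
    curvF' a b da db =
      2 * ⟪b, db⟫ / ‖a‖ ^ 3 - 3 * ‖b‖ ^ 2 * ⟪a, da⟫ / ‖a‖ ^ 5
        - 2 * (⟪a, db⟫ + ⟪b, da⟫) * ⟪a, b⟫ / ‖a‖ ^ 5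
        + 5 * ⟪a, da⟫ * ⟪a, b⟫ ^ 2 / ‖a‖ ^ 7 := by
  have hn : ‖a‖ ≠ 0 := norm_ne_zero_iff.2 h0
  have hQ : ⟪a,a⟫ = ‖a‖ ^ 2 := real_inner_self_eq_norm_sq a
  have hR : ⟪b,b⟫ = ‖b‖ ^ 2 := real_inner_self_eq_norm_sq b
  rw [curvF', real_inner_comm da a, real_inner_comm da b, real_inner_comm db b, hQ, hR,
    Real.sqrt_sq (norm_nonneg a)]
  field_simp
  ring

lemma qpos {a : E3} (h : a ≠ 0) : (0:ℝ) < ⟪a,a⟫ := by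
  have : (0:ℝ) < ‖a‖ := norm_pos_iff.2 h
  rw [real_inner_self_eq_norm_sq]; positivity

lemma continuousOn_curvF {α} [TopologicalSpace α] {U : Set α} {a b : α → E3}
    (ha : ContinuousOn a U) (hb : ContinuousOn b U) (h0 : ∀ x ∈ U, a x ≠ 0) :
    ContinuousOn (fun x => curvF (a x) (b x)) U := by
  simp only [curvF]
  apply ContinuousOn.div
  · exact ((ha.inner ha).mul (hb.inner hb)).sub ((ha.inner hb).pow 2)
  · exact ((ha.inner ha).pow 2).mul (Real.continuous_sqrt.comp_continuousOn (ha.inner ha))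
  · intro x hx
    have h := qpos (h0 x hx)
    positivity

lemma continuousOn_curvF' {α} [TopologicalSpace α] {U : Set α} {a b da db : α → E3}
    (ha : ContinuousOn a U) (hb : ContinuousOn b U)
    (hda : ContinuousOn da U) (hdb : ContinuousOn db U) (h0 : ∀ x ∈ U, a x ≠ 0) :
    ContinuousOn (fun x => curvF' (a x) (b x) (da x) (db x)) U := by
  simp only [curvF']
  have hq : ContinuousOn (fun x => ⟪a x, a x⟫) U := ha.inner ha
  have hsq : ContinuousOn (fun x => Real.sqrt ⟪a x, a x⟫) U :=
    Real.continuous_sqrt.comp_continuousOn hq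
  have hq' : ContinuousOn (fun x => ⟪a x, da x⟫ + ⟪da x, a x⟫) U :=
    (ha.inner hda).add (hda.inner ha)
  have hD : ContinuousOn (fun x => ⟪a x, a x⟫ ^ 2 * Real.sqrt ⟪a x, a x⟫) U :=
    (hq.pow 2).mul hsq
  have hsqpos : ∀ x ∈ U, 0 < Real.sqrt ⟪a x, a x⟫ :=
    fun x hx => Real.sqrt_pos.2 (qpos (h0 x hx))
  apply ContinuousOn.div
  · apply ContinuousOn.sub
    · exact (((hq'.mul (hb.inner hb)).add (hq.mul ((hb.inner hdb).add (hdb.inner hb)))).sub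
        (((continuousOn_const.mul ((ha.inner hb).pow 1))).mul
          ((ha.inner hdb).add (hda.inner hb)))).mul hD
    · refine (((hq.mul (hb.inner hb)).sub ((ha.inner hb).pow 2)).mul ?_)
      refine (((continuousOn_const.mul (hq.pow 1)).mul hq').mul hsq).add
        ((hq.pow 2).mul (hq'.div (continuousOn_const.mul hsq) ?_))
      intro x hx
      have := hsqpos x hx; positivity
  · exact hD.pow 2
  · intro x hx
    have h := qpos (h0 x hx)
    have h2 := hsqpos x hx
    positivity

set_option maxHeartbeats 2000000 in
/-- Lemma 4.4, bending penalty term: directional derivative at `s = 0` of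
`Ψ₂(p + sh) = (1/L)∫₀ᴸ |(p′+sh′) × (p″+sh″)|²/|p′+sh′|⁵ dt`. -/
theorem penalty_curvature_derivative
    (L : ℝ) (hL : 0 < L)
    (p h : ℝ → EuclideanSpace ℝ (Fin 3))
    (p' h' p'' h'' : ℝ → EuclideanSpace ℝ (Fin 3))
    (hp : ∀ t ∈ Set.Icc (0 : ℝ) L, HasDerivAt p (p' t) t)
    (hp' : ∀ t ∈ Set.Icc (0 : ℝ) L, HasDerivAt p' (p'' t) t)
    (hp''c : ContinuousOn p'' (Set.Icc (0 : ℝ) L))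
    (hp'0 : ∀ t ∈ Set.Icc (0 : ℝ) L, p' t ≠ 0)
    (hh : ∀ t ∈ Set.Icc (0 : ℝ) L, HasDerivAt h (h' t) t)
    (hh' : ∀ t ∈ Set.Icc (0 : ℝ) L, HasDerivAt h' (h'' t) t)
    (hh''c : ContinuousOn h'' (Set.Icc (0 : ℝ) L))
    (g : ℝ → ℝ)
    (hg : g = fun s => L⁻¹ * ∫ t in (0 : ℝ)..L,
      ‖cross3 (p' t + s • h' t) (p'' t + s • h'' t)‖ ^ 2 / ‖p' t + s • h' t‖ ^ 5) :
    HasDerivAt g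
      (L⁻¹ * ∫ t in (0 : ℝ)..L,
        (2 * ⟪p'' t, h'' t⟫ / ‖p' t‖ ^ 3
          - 3 * ‖p'' t‖ ^ 2 * ⟪p' t, h' t⟫ / ‖p' t‖ ^ 5
          - 2 * (⟪p' t, h'' t⟫ + ⟪p'' t, h' t⟫) * ⟪p' t, p'' t⟫ / ‖p' t‖ ^ 5
          + 5 * ⟪p' t, h' t⟫ * ⟪p' t, p'' t⟫ ^ 2 / ‖p' t‖ ^ 7))
      0 := by
  have hL0 : (0:ℝ) ≤ L := hL.le
  set K : Set ℝ := Set.Icc (0:ℝ) L with hK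
  have hKuIcc : Set.uIcc (0:ℝ) L = K := Set.uIcc_of_le hL0
  have hIsub : Set.uIoc (0:ℝ) L ⊆ K := by
    rw [Set.uIoc_of_le hL0]; exact Set.Ioc_subset_Icc_self
  -- continuity of the data
  have hp'c : ContinuousOn p' K := fun t ht => (hp' t ht).continuousAt.continuousWithinAt
  have hh'c : ContinuousOn h' K := fun t ht => (hh' t ht).continuousAt.continuousWithinAt
  -- lower bound for ‖p'‖ on K
  obtain ⟨t₀, ht₀, hmin'⟩ := isCompact_Icc.exists_isMinOn (Set.nonempty_Icc.2 hL0)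
    (continuous_norm.comp_continuousOn hp'c)
  have hmin : ∀ t ∈ K, ‖p' t₀‖ ≤ ‖p' t‖ := fun t ht => isMinOn_iff.1 hmin' t ht
  set δ : ℝ := ‖p' t₀‖ with hδdef
  have hδ : 0 < δ := norm_pos_iff.2 (hp'0 t₀ ht₀)
  -- upper bound for ‖h'‖ on K
  obtain ⟨C₀, hC₀⟩ := isCompact_Icc.exists_bound_of_continuousOn hh'c
  set C : ℝ := max C₀ 0 with hCdef
  have hC : 0 ≤ C := le_max_right _ _
  have hC' : ∀ t ∈ K, ‖h' t‖ ≤ C := fun t ht => (hC₀ t ht).trans (le_max_left _ _)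
  set ε : ℝ := δ / (2 * (C + 1)) with hεdef
  have hε : 0 < ε := by positivity
  -- nonvanishing
  have key : ∀ x ∈ Metric.closedBall (0:ℝ) ε, ∀ t ∈ K, p' t + x • h' t ≠ 0 := by
    intro x hx t ht
    have hxε : |x| ≤ ε := by
      simpa [Real.dist_eq] using Metric.mem_closedBall.1 hx
    have h1 : ‖p' t‖ - ‖x • h' t‖ ≤ ‖p' t + x • h' t‖ := by
      have := norm_sub_norm_le (p' t) (-(x • h' t))
      simpa [sub_neg_eq_add] using this
    have h2 : ‖x • h' t‖ ≤ ε * C := by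
      rw [norm_smul]
      exact mul_le_mul hxε (hC' t ht) (norm_nonneg _) hε.le
    have h3 : δ ≤ ‖p' t‖ := hmin t ht
    have h4 : ε * C < δ := by
      rw [hεdef]
      rw [div_mul_eq_mul_div, div_lt_iff₀ (by positivity)]
      nlinarith
    intro hcontra
    rw [hcontra, norm_zero] at h1
    have : ‖p' t‖ ≤ ‖x • h' t‖ := by linarith
    linarith [h2.trans_lt h4, h3]
  -- joint continuity domain
  set U : Set (ℝ × ℝ) := Metric.closedBall (0:ℝ) ε ×ˢ K with hUdef
  have hUcomp : IsCompact U := (isCompact_closedBall _ _).prod isCompact_Icc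
  have hUA : ContinuousOn (fun z : ℝ × ℝ => p' z.2 + z.1 • h' z.2) U := by
    refine ContinuousOn.add ?_ (ContinuousOn.fun_smul ?_ ?_)
    · exact hp'c.comp continuous_snd.continuousOn (fun z hz => hz.2)
    · exact continuous_fst.continuousOn
    · exact hh'c.comp continuous_snd.continuousOn (fun z hz => hz.2)
  have hUB : ContinuousOn (fun z : ℝ × ℝ => p'' z.2 + z.1 • h'' z.2) U := by
    refine ContinuousOn.add ?_ (ContinuousOn.fun_smul ?_ ?_)
    · exact hp''c.comp continuous_snd.continuousOn (fun z hz => hz.2)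
    · exact continuous_fst.continuousOn
    · exact hh''c.comp continuous_snd.continuousOn (fun z hz => hz.2)
  have hUda : ContinuousOn (fun z : ℝ × ℝ => h' z.2) U :=
    hh'c.comp continuous_snd.continuousOn (fun z hz => hz.2)
  have hUdb : ContinuousOn (fun z : ℝ × ℝ => h'' z.2) U :=
    hh''c.comp continuous_snd.continuousOn (fun z hz => hz.2)
  have hU0 : ∀ z ∈ U, p' z.2 + z.1 • h' z.2 ≠ 0 := fun z hz => key z.1 hz.1 z.2 hz.2
  have hFjoint : ContinuousOn
      (fun z : ℝ × ℝ => curvF (p' z.2 + z.1 • h' z.2) (p'' z.2 + z.1 • h'' z.2)) U :=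
    continuousOn_curvF hUA hUB hU0
  have hF'joint : ContinuousOn
      (fun z : ℝ × ℝ => curvF' (p' z.2 + z.1 • h' z.2) (p'' z.2 + z.1 • h'' z.2)
        (h' z.2) (h'' z.2)) U :=
    continuousOn_curvF' hUA hUB hUda hUdb hU0
  obtain ⟨Cb, hCb⟩ := hUcomp.exists_bound_of_continuousOn hF'joint
  -- slices
  have hslice : ∀ x ∈ Metric.closedBall (0:ℝ) ε,
      ContinuousOn (fun t => curvF (p' t + x • h' t) (p'' t + x • h'' t)) K := by
    intro x hx
    have hmap : Set.MapsTo (fun t : ℝ => (x, t)) K U := fun t ht => ⟨hx, ht⟩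
    have := ContinuousOn.comp (g := fun z : ℝ × ℝ => curvF (p' z.2 + z.1 • h' z.2)
        (p'' z.2 + z.1 • h'' z.2)) (f := fun t : ℝ => (x, t))
      hFjoint ((continuous_const.prodMk continuous_id).continuousOn) hmap
    simpa [Function.comp_def] using this
  have hslice' : ContinuousOn
      (fun t => curvF' (p' t + (0:ℝ) • h' t) (p'' t + (0:ℝ) • h'' t) (h' t) (h'' t)) K := by
    have hmap : Set.MapsTo (fun t : ℝ => ((0:ℝ), t)) K U :=
      fun t ht => ⟨Metric.mem_closedBall_self hε.le, ht⟩
    have := ContinuousOn.comp (g := fun z : ℝ × ℝ => curvF' (p' z.2 + z.1 • h' z.2)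
        (p'' z.2 + z.1 • h'' z.2) (h' z.2) (h'' z.2)) (f := fun t : ℝ => ((0:ℝ), t))
      hF'joint ((continuous_const.prodMk continuous_id).continuousOn) hmap
    simpa [Function.comp_def] using this
  -- apply dominated differentiation
  have main := intervalIntegral.hasDerivAt_integral_of_dominated_loc_of_deriv_le
    (F := fun s t => curvF (p' t + s • h' t) (p'' t + s • h'' t))
    (F' := fun s t => curvF' (p' t + s • h' t) (p'' t + s • h'' t) (h' t) (h'' t))
    (x₀ := (0:ℝ)) (a := (0:ℝ)) (b := L) (μ := MeasureTheory.volume)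
    (bound := fun _ => Cb) (Metric.ball_mem_nhds (0:ℝ) hε)
    ?_ ?_ ?_ ?_ ?_ ?_
  · obtain ⟨-, hder⟩ := main
    have hfinal := hder.const_mul L⁻¹
    have hgeq : g = fun x => L⁻¹ * ∫ t in (0:ℝ)..L,
        curvF (p' t + x • h' t) (p'' t + x • h'' t) := by
      rw [hg]
      funext s
      congr 1
      apply intervalIntegral.integral_congr
      intro t _
      exact (curvF_eq _ _).symm
    rw [hgeq]
    refine hfinal.congr_deriv (Eq.symm ?_)
    congr 1
    apply intervalIntegral.integral_congr
    intro t ht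
    rw [hKuIcc] at ht
    have h0 : p' t + (0:ℝ) • h' t ≠ 0 := by simpa using hp'0 t ht
    symm
    show curvF' (p' t + (0:ℝ) • h' t) (p'' t + (0:ℝ) • h'' t) (h' t) (h'' t) = _
    rw [curvF'_eval _ _ _ _ h0]
    simp
  · -- hF_meas
    filter_upwards [Metric.closedBall_mem_nhds (0:ℝ) hε] with x hx
    exact ((hslice x hx).mono hIsub).aestronglyMeasurable measurableSet_uIoc
  · -- hF_int
    apply ContinuousOn.intervalIntegrable
    rw [hKuIcc]
    exact hslice 0 (Metric.mem_closedBall_self hε.le)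
  · -- hF'_meas
    exact (hslice'.mono hIsub).aestronglyMeasurable measurableSet_uIoc
  · -- h_bound
    apply Filter.Eventually.of_forall
    intro t ht x hx
    exact hCb (x, t) ⟨Metric.ball_subset_closedBall hx, hIsub ht⟩
  · -- bound_integrable
    exact intervalIntegrable_const
  · -- h_diff
    apply Filter.Eventually.of_forall
    intro t ht x hx
    have htK : t ∈ K := hIsub ht
    have hA : HasDerivAt (fun s : ℝ => p' t + s • h' t) (h' t) x := by
      simpa using ((hasDerivAt_id x).smul_const (h' t)).const_add (p' t)
    have hB : HasDerivAt (fun s : ℝ => p'' t + s • h'' t) (h'' t) x := by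
      simpa using ((hasDerivAt_id x).smul_const (h'' t)).const_add (p'' t)
    exact hasDerivAt_curvF hA hB (key x (Metric.ball_subset_closedBall hx) t htK)
end

section
/- Let L > 0, let p : [0, L] → ℝ³ be continuously differentiable with p′(t) ≠ 0 for all t, let n, b : [0, L] → ℝ³ be continuously differentiable with ‖n(t)‖ = ‖b(t)‖ = 1 and n(t)·b(t) = 0 for all t, and let φ : [0, L] → ℝ be continuously differentiable. For s ∈ ℝ define n_s(t) := cos(s φ(t)) n(t) + sin(s φ(t)) b(t) and b_s(t) := −sin(s φ(t)) n(t) + cos(s φ(t)) b(t). Then the function g(s) := (1/L) ∫₀^L ( n_s′(t) · b_s(t) )² ‖p′(t)‖ dt is differentiable at s = 0 with g′(0) = (1/L) ∫₀^L 2 ( n′(t)·b(t) ) φ′(t) ‖p′(t)‖ dt. -/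
open BigOperators intervalIntegral
open scoped RealInnerProductSpace

/-- Lemma 4.4, twist penalty term: the partial derivative `∂_θΨ₃[p, V_{p,θ}](φ)` of
the twist penalty `Ψ₃ = (1/L)∫₀ᴸ β²|p′| dt` at `s = 0`, where the twist function is
perturbed in direction `φ`. -/
theorem penalty_twist_derivative
    (L : ℝ) (hL : 0 < L)
    (p p' : ℝ → EuclideanSpace ℝ (Fin 3))
    (hp : ∀ t ∈ Set.Icc (0 : ℝ) L, HasDerivAt p (p' t) t)
    (hp'c : ContinuousOn p' (Set.Icc (0 : ℝ) L))
    (hp'0 : ∀ t ∈ Set.Icc (0 : ℝ) L, p' t ≠ 0)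
    (n b n' b' : ℝ → EuclideanSpace ℝ (Fin 3))
    (hn : ∀ t ∈ Set.Icc (0 : ℝ) L, HasDerivAt n (n' t) t)
    (hn'c : ContinuousOn n' (Set.Icc (0 : ℝ) L))
    (hb : ∀ t ∈ Set.Icc (0 : ℝ) L, HasDerivAt b (b' t) t)
    (hb'c : ContinuousOn b' (Set.Icc (0 : ℝ) L))
    (hnu : ∀ t ∈ Set.Icc (0 : ℝ) L, ‖n t‖ = 1)
    (hbu : ∀ t ∈ Set.Icc (0 : ℝ) L, ‖b t‖ = 1)
    (hnb : ∀ t ∈ Set.Icc (0 : ℝ) L, ⟪n t, b t⟫ = 0)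
    (φ φ' : ℝ → ℝ)
    (hφ : ∀ t ∈ Set.Icc (0 : ℝ) L, HasDerivAt φ (φ' t) t)
    (hφ'c : ContinuousOn φ' (Set.Icc (0 : ℝ) L))
    (g : ℝ → ℝ)
    (hg : g = fun s => L⁻¹ * ∫ t in (0 : ℝ)..L,
      (⟪deriv (fun u => Real.cos (s * φ u) • n u + Real.sin (s * φ u) • b u) t,
          -Real.sin (s * φ t) • n t + Real.cos (s * φ t) • b t⟫) ^ 2 * ‖p' t‖) :
    HasDerivAt g
      (L⁻¹ * ∫ t in (0 : ℝ)..L, 2 * ⟪n' t, b t⟫ * φ' t * ‖p' t‖)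
      0 := by

  have hud : UniqueDiffOn ℝ (Set.Icc (0:ℝ) L) := uniqueDiffOn_Icc hL
  set β : ℝ → ℝ := fun t => ⟪n' t, b t⟫ with hβdef
  -- derivative orthogonality facts
  have hnn : ∀ t ∈ Set.Icc (0:ℝ) L, ⟪n' t, n t⟫ = 0 := by
    intro t ht
    have h1 : HasDerivWithinAt (fun u => ⟪n u, n u⟫) (⟪n t, n' t⟫ + ⟪n' t, n t⟫)
        (Set.Icc (0:ℝ) L) t := (((hn t ht).inner ℝ (hn t ht))).hasDerivWithinAt
    have h2 : HasDerivWithinAt (fun u => ⟪n u, n u⟫) 0 (Set.Icc (0:ℝ) L) t := by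
      refine (hasDerivWithinAt_const t _ (1:ℝ)).congr (fun y hy => ?_) ?_
      · rw [real_inner_self_eq_norm_sq, hnu y hy]; norm_num
      · rw [real_inner_self_eq_norm_sq, hnu t ht]; norm_num
    have hsymm : ⟪n t, n' t⟫ = ⟪n' t, n t⟫ := real_inner_comm _ _
    linarith [(h1.derivWithin (hud t ht)).symm.trans (h2.derivWithin (hud t ht))]
  have hbbd : ∀ t ∈ Set.Icc (0:ℝ) L, ⟪b' t, b t⟫ = 0 := by
    intro t ht
    have h1 : HasDerivWithinAt (fun u => ⟪b u, b u⟫) (⟪b t, b' t⟫ + ⟪b' t, b t⟫)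
        (Set.Icc (0:ℝ) L) t := (((hb t ht).inner ℝ (hb t ht))).hasDerivWithinAt
    have h2 : HasDerivWithinAt (fun u => ⟪b u, b u⟫) 0 (Set.Icc (0:ℝ) L) t := by
      refine (hasDerivWithinAt_const t _ (1:ℝ)).congr (fun y hy => ?_) ?_
      · rw [real_inner_self_eq_norm_sq, hbu y hy]; norm_num
      · rw [real_inner_self_eq_norm_sq, hbu t ht]; norm_num
    have hsymm : ⟪b t, b' t⟫ = ⟪b' t, b t⟫ := real_inner_comm _ _
    linarith [(h1.derivWithin (hud t ht)).symm.trans (h2.derivWithin (hud t ht))]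
  have hmix : ∀ t ∈ Set.Icc (0:ℝ) L, ⟪n t, b' t⟫ = -⟪n' t, b t⟫ := by
    intro t ht
    have h1 : HasDerivWithinAt (fun u => ⟪n u, b u⟫) (⟪n t, b' t⟫ + ⟪n' t, b t⟫)
        (Set.Icc (0:ℝ) L) t := (((hn t ht).inner ℝ (hb t ht))).hasDerivWithinAt
    have h2 : HasDerivWithinAt (fun u => ⟪n u, b u⟫) 0 (Set.Icc (0:ℝ) L) t := by
      refine (hasDerivWithinAt_const t _ (0:ℝ)).congr (fun y hy => hnb y hy) (hnb t ht)
    linarith [(h1.derivWithin (hud t ht)).symm.trans (h2.derivWithin (hud t ht))]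
  -- pointwise simplification of the integrand
  have key : ∀ s : ℝ, ∀ t ∈ Set.Icc (0:ℝ) L,
      (⟪deriv (fun u => Real.cos (s * φ u) • n u + Real.sin (s * φ u) • b u) t,
          -Real.sin (s * φ t) • n t + Real.cos (s * φ t) • b t⟫ : ℝ)
        = s * φ' t + β t := by
    intro s t ht
    have hφt : HasDerivAt (fun u => s * φ u) (s * φ' t) t := (hφ t ht).const_mul s
    have hcos : HasDerivAt (fun u => Real.cos (s * φ u))
        (-Real.sin (s * φ t) * (s * φ' t)) t := hφt.cos
    have hsin : HasDerivAt (fun u => Real.sin (s * φ u))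
        (Real.cos (s * φ t) * (s * φ' t)) t := hφt.sin
    have hD : HasDerivAt (fun u => Real.cos (s * φ u) • n u + Real.sin (s * φ u) • b u)
        ((Real.cos (s * φ t) • n' t + (-Real.sin (s * φ t) * (s * φ' t)) • n t) +
         (Real.sin (s * φ t) • b' t + (Real.cos (s * φ t) * (s * φ' t)) • b t)) t :=
      (hcos.smul (hn t ht)).add (hsin.smul (hb t ht))
    rw [hD.deriv]
    have e1 : (⟪n t, n t⟫ : ℝ) = 1 := by
      rw [real_inner_self_eq_norm_sq, hnu t ht]; norm_num
    have e2 : (⟪b t, b t⟫ : ℝ) = 1 := by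
      rw [real_inner_self_eq_norm_sq, hbu t ht]; norm_num
    have e3 := hnb t ht
    have e4 := hnn t ht
    have e5 := hbbd t ht
    have e6 := hmix t ht
    have e3' : (⟪b t, n t⟫ : ℝ) = 0 := by rw [real_inner_comm]; exact e3
    have e4' : (⟪n t, n' t⟫ : ℝ) = ⟪n' t, n t⟫ := real_inner_comm _ _
    have e5' : (⟪b t, b' t⟫ : ℝ) = ⟪b' t, b t⟫ := real_inner_comm _ _
    have e6' : (⟪b' t, n t⟫ : ℝ) = ⟪n t, b' t⟫ := real_inner_comm _ _
    have e7 : (⟪n' t, b t⟫ : ℝ) = β t := rfl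
    have e8 : (⟪b t, n' t⟫ : ℝ) = β t := by rw [real_inner_comm]
    have e9 : (⟪n t, b' t⟫ : ℝ) = -β t := by rw [e6]
    have trig : Real.sin (s * φ t) ^ 2 + Real.cos (s * φ t) ^ 2 = 1 :=
      Real.sin_sq_add_cos_sq _
    have e10 : (⟪b' t, n t⟫ : ℝ) = -β t := by rw [real_inner_comm]; exact e9
    simp only [inner_add_left, inner_add_right, inner_smul_left, inner_smul_right,
      RCLike.ofReal_real_eq_id, id_eq]
    simp only [conj_trivial]
    rw [e1, e2, e3, e3', e4, e5, e7, e10]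
    linear_combination (s * φ' t + β t) * trig
  -- rewrite g as a quadratic polynomial in s
  have hIcc : Set.uIcc (0:ℝ) L = Set.Icc 0 L := Set.uIcc_of_le hL.le
  have hβc : ContinuousOn β (Set.Icc (0:ℝ) L) :=
    hn'c.inner (fun t ht => ((hb t ht).continuousAt.continuousWithinAt))
  have hnc : ContinuousOn (fun t => ‖p' t‖) (Set.Icc (0:ℝ) L) := hp'c.norm
  have iA : IntervalIntegrable (fun t => (φ' t)^2 * ‖p' t‖) MeasureTheory.volume 0 L := by
    apply ContinuousOn.intervalIntegrable; rw [hIcc]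
    exact ((hφ'c.pow 2).mul hnc)
  have iB : IntervalIntegrable (fun t => 2 * β t * φ' t * ‖p' t‖) MeasureTheory.volume 0 L := by
    apply ContinuousOn.intervalIntegrable; rw [hIcc]
    exact (((continuousOn_const.mul hβc).mul hφ'c).mul hnc)
  have iC : IntervalIntegrable (fun t => (β t)^2 * ‖p' t‖) MeasureTheory.volume 0 L := by
    apply ContinuousOn.intervalIntegrable; rw [hIcc]
    exact ((hβc.pow 2).mul hnc)
  set A := ∫ t in (0:ℝ)..L, (φ' t)^2 * ‖p' t‖ with hA
  set B := ∫ t in (0:ℝ)..L, 2 * β t * φ' t * ‖p' t‖ with hB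
  set C := ∫ t in (0:ℝ)..L, (β t)^2 * ‖p' t‖ with hC
  have hpoly : g = fun s => L⁻¹ * (s^2 * A + s * B + C) := by
    funext s
    simp only [hg]
    congr 1
    have h1 : (∫ t in (0:ℝ)..L,
        (⟪deriv (fun u => Real.cos (s * φ u) • n u + Real.sin (s * φ u) • b u) t,
          -Real.sin (s * φ t) • n t + Real.cos (s * φ t) • b t⟫ : ℝ) ^ 2 * ‖p' t‖)
        = ∫ t in (0:ℝ)..L,
          (s^2 * ((φ' t)^2 * ‖p' t‖) + s * (2 * β t * φ' t * ‖p' t‖) + (β t)^2 * ‖p' t‖) := by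
      apply intervalIntegral.integral_congr
      intro t ht
      rw [hIcc] at ht
      dsimp only
      rw [key s t ht]
      ring
    rw [h1]
    rw [intervalIntegral.integral_add (((iA.const_mul (s^2)).add (iB.const_mul s)))
        iC,
      intervalIntegral.integral_add (iA.const_mul (s^2)) (iB.const_mul s),
      intervalIntegral.integral_const_mul, intervalIntegral.integral_const_mul]
  rw [hpoly]
  have hgoal : (L⁻¹ * ∫ t in (0:ℝ)..L, 2 * ⟪n' t, b t⟫ * φ' t * ‖p' t‖) = L⁻¹ * B := rfl
  rw [hgoal]
  have hq : HasDerivAt (fun s : ℝ => s^2 * A + s * B + C) (B) 0 := by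
    have h1 : HasDerivAt (fun s : ℝ => s^2) (2 * 0 ^ 1) (0:ℝ) := by
      simpa using hasDerivAt_pow 2 (0:ℝ)
    have := ((h1.mul_const A).add ((hasDerivAt_id (0:ℝ)).mul_const B)).add_const C
    simpa using this
  simpa using hq.const_mul L⁻¹
end
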